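/- arXiv:1408.3327 — 6 statements merged into one kernel-verified Lean document; each statement's English description precedes it below -/
import Mathlib

section
/- Let T = {a : ℕ → K | ‖a n‖ → 0 as n → ∞} (the coefficient model of the Tate algebra K⟨T⟩ of the closed unit disk, a K-submodule of ℕ → K). The formal derivative operator D maps T into itself, and the quotient K-vector space T ⧸ (range of D restricted to T) is infinite-dimensional over K. (This is the paper's motivating observation: the first de Rham cohomology of a positive-dimensional smooth affinoid rigid space, computed with the usual non-overconvergent structure sheaf, is not finite dimensional.) -/
open Filter Topology

/-- The coefficient model of the Tate algebra `K⟨T⟩` of the closed unit disk: sequences of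
coefficients tending to zero in norm.  It is a `K`-submodule of `ℕ → K`. -/
def TateDisk (K : Type*) [NormedField K] : Submodule K (ℕ → K) where
  carrier := {a | Tendsto (fun n : ℕ => ‖a n‖) atTop (𝓝 0)}
  zero_mem' := by
    simp
  add_mem' := by
    intro a b ha hb
    simp only [Set.mem_setOf_eq] at ha hb ⊢
    exact squeeze_zero (fun n => norm_nonneg _) (fun n => norm_add_le _ _)
      (by simpa using ha.add hb)
  smul_mem' := by
    intro c a ha
    simp only [Set.mem_setOf_eq] at ha ⊢
    simpa [norm_mul] using ha.const_mul ‖c‖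

/-- The formal derivative operator `f ↦ df/dT` on coefficient sequences:
`(D a) n = (n + 1) * a (n + 1)`. -/
def DerN (K : Type*) [NormedField K] : (ℕ → K) →ₗ[K] (ℕ → K) where
  toFun a := fun n => ((n + 1 : ℕ) : K) * a (n + 1)
  map_add' a b := by funext n; simp [mul_add]
  map_smul' c a := by
    funext n
    simp only [Pi.smul_apply, smul_eq_mul, RingHom.id_apply]
    ring

lemma mem_TateDisk {K : Type*} [NormedField K] {a : ℕ → K} :
    a ∈ TateDisk K ↔ Tendsto (fun n : ℕ => ‖a n‖) atTop (𝓝 0) := Iff.rfl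

/-- Auxiliary family: `auxF K p j` has coefficient `(p : K) ^ m` at index `p ^ m - 1`
for those `m` whose `Nat.unpair` first component is `j`, and `0` elsewhere. -/
def auxF (K : Type*) [NormedField K] (p j : ℕ) : ℕ → K := fun n =>
  if n + 1 = p ^ (Nat.log p (n + 1)) ∧ (Nat.log p (n + 1)).unpair.1 = j then
    (p : K) ^ (Nat.log p (n + 1)) else 0

lemma auxF_pow {K : Type*} [NormedField K] {p : ℕ} (hp : 1 < p) (j m : ℕ) :
    auxF K p j (p ^ m - 1) = if m.unpair.1 = j then (p : K) ^ m else 0 := by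
  have h1 : p ^ m - 1 + 1 = p ^ m := Nat.sub_add_cancel (Nat.one_le_pow _ _ (by omega))
  simp [auxF, h1, Nat.log_pow hp]

lemma auxF_norm_le {K : Type*} [NormedField K] (p j n : ℕ) :
    ‖auxF K p j n‖ ≤ ‖(p : K)‖ ^ Nat.log p (n + 1) := by
  unfold auxF
  split
  · rw [norm_pow]
  · simp only [norm_zero]
    exact pow_nonneg (norm_nonneg ((p : K))) (Nat.log p (n + 1))

lemma auxF_mem {K : Type*} [NormedField K] {p : ℕ} (hp : 1 < p)
    (hpK : ‖(p : K)‖ < 1) (j : ℕ) : auxF K p j ∈ TateDisk K := by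
  rw [mem_TateDisk]
  have hlog : Tendsto (fun n : ℕ => Nat.log p (n + 1)) atTop atTop := by
    rw [tendsto_atTop_atTop]
    refine fun b => ⟨p ^ b, fun n hn => ?_⟩
    exact (Nat.le_log_iff_pow_le hp (by omega)).mpr (le_trans hn (Nat.le_succ n))
  have h2 : Tendsto (fun n : ℕ => ‖(p : K)‖ ^ Nat.log p (n + 1)) atTop (𝓝 0) :=
    (tendsto_pow_atTop_nhds_zero_of_lt_one (norm_nonneg _) hpK).comp hlog
  exact squeeze_zero (fun n => norm_nonneg _) (fun n => auxF_norm_le p j n) h2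

/-- **The motivating observation of the paper**: the first de Rham cohomology of the closed rigid
unit disk, computed with the usual (non-overconvergent) structure sheaf, is not finite
dimensional.  Concretely: the formal derivative maps the Tate algebra into itself, and the
quotient of the Tate algebra by the range of the derivative is an infinite-dimensional
`K`-vector space. -/
theorem tate_deRham_not_finiteDimensional
    (K : Type*) [NormedField K] [IsUltrametricDist K] [CharZero K]
    (p : ℕ) (hp : p.Prime) (hpK : ‖(p : K)‖ < 1) :
    (∀ a ∈ TateDisk K, DerN K a ∈ TateDisk K) ∧
      ¬ Module.Finite K
        ((TateDisk K) ⧸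
          Submodule.comap (TateDisk K).subtype
            (Submodule.map (DerN K) (TateDisk K))) := by
  constructor
  · intro a ha
    rw [mem_TateDisk] at ha ⊢
    refine squeeze_zero (fun n => norm_nonneg _) (fun n => ?_)
      (ha.comp (tendsto_add_atTop_nat 1))
    show ‖((n + 1 : ℕ) : K) * a (n + 1)‖ ≤ ‖a (n + 1)‖
    rw [norm_mul]
    exact mul_le_of_le_one_left (norm_nonneg _) (IsUltrametricDist.norm_natCast_le_one K _)
  · intro hfin
    set N : Submodule K (TateDisk K) :=
      Submodule.comap (TateDisk K).subtype (Submodule.map (DerN K) (TateDisk K)) with hN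
    have hpne : (p : K) ≠ 0 := Nat.cast_ne_zero.mpr hp.pos.ne'
    set fe : ℕ → TateDisk K := fun j => ⟨auxF K p j, auxF_mem hp.one_lt hpK j⟩ with hfe
    have hli : LinearIndependent K (fun j => N.mkQ (fe j)) := by
      rw [linearIndependent_iff']
      intro s g hsum i hi
      by_contra hgi
      have hmk : N.mkQ (∑ j ∈ s, g j • fe j) = 0 := by
        rw [map_sum]
        simp_rw [map_smul]
        exact hsum
      rw [Submodule.mkQ_apply, Submodule.Quotient.mk_eq_zero] at hmk
      rw [hN, Submodule.mem_comap, Submodule.mem_map] at hmk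
      obtain ⟨b, hb, hDb⟩ := hmk
      rw [mem_TateDisk] at hb
      have key : ∀ k : ℕ, b (p ^ Nat.pair i k) = g i := by
        intro k
        set m := Nat.pair i k with hm
        have hidx : p ^ m - 1 + 1 = p ^ m := Nat.sub_add_cancel (Nat.one_le_pow _ _ hp.pos)
        have hev := congrFun hDb (p ^ m - 1)
        have hL : DerN K b (p ^ m - 1) = (p : K) ^ m * b (p ^ m) := by
          show ((p ^ m - 1 + 1 : ℕ) : K) * b (p ^ m - 1 + 1) = _
          rw [hidx]
          push_cast
          ring
        have hR : ((TateDisk K).subtype (∑ j ∈ s, g j • fe j)) (p ^ m - 1)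
            = g i * (p : K) ^ m := by
          have hco : (((∑ j ∈ s, g j • fe j : TateDisk K) : ℕ → K)) (p ^ m - 1)
              = ∑ j ∈ s, (g j • auxF K p j) (p ^ m - 1) := by
            rw [show (((∑ j ∈ s, g j • fe j : TateDisk K) : ℕ → K))
                = ∑ j ∈ s, g j • auxF K p j by push_cast [hfe]; rfl]
            exact Finset.sum_apply _ _ _
          rw [Submodule.subtype_apply, hco]
          have : ∀ j ∈ s, (g j • auxF K p j) (p ^ m - 1)
              = if i = j then g j * (p : K) ^ m else 0 := by
            intro j _
            rw [Pi.smul_apply, smul_eq_mul, auxF_pow hp.one_lt j m]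
            simp [auxF_pow hp.one_lt j m, hm, Nat.unpair_pair, mul_ite]
          rw [Finset.sum_congr rfl this, Finset.sum_ite_eq, if_pos hi]
        rw [hL, hR] at hev
        have := mul_left_cancel₀ (pow_ne_zero m hpne) (hev.trans (mul_comm _ _))
        exact this
      have hpos : 0 < ‖g i‖ := norm_pos_iff.mpr hgi
      obtain ⟨M, hM⟩ := (Metric.tendsto_atTop.mp hb) ‖g i‖ hpos
      have hmge : M ≤ p ^ Nat.pair i M :=
        le_trans (Nat.right_le_pair i M) (Nat.lt_pow_self hp.one_lt).le
      have := hM (p ^ Nat.pair i M) hmge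
      rw [key M, Real.dist_eq, sub_zero, abs_of_nonneg (norm_nonneg _)] at this
      exact lt_irrefl _ this
    exact absurd hli.aleph0_le_rank (not_le.mpr (Module.rank_lt_aleph0 K _))
end

section
/- Let a : ℕ → K and let ρ be a real number with 0 < ρ such that ‖a n‖ · ρ^n → 0 as n → ∞. Then for every real ρ' with 0 < ρ' < ρ one has ‖a n / ((n + 1 : ℕ) : K)‖ · (ρ')^n → 0 as n → ∞. (Formal integration preserves overconvergent decay of coefficients, at the cost of an arbitrarily small shrinking of the radius; the point is that in a characteristic-zero ultrametric normed field the quantity ‖((n : ℕ) : K)⁻¹‖ grows at most polynomially in n.) -/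
open Filter Topology IsUltrametricDist

lemma norm_nat_lower_bound {K : Type*} [NormedField K] [IsUltrametricDist K] [CharZero K] :
    ∃ c : ℝ, 0 < c ∧ c ≤ 1 ∧ ∀ n : ℕ, 1 ≤ n → c ^ Nat.log 2 n ≤ ‖(n : K)‖ := by
  by_cases hp : ∃ p : ℕ, p.Prime ∧ ‖(p : K)‖ < 1
  · obtain ⟨p, hp, hplt⟩ := hp
    have hp0 : (0:ℝ) < ‖(p : K)‖ := by
      have : (p : K) ≠ 0 := Nat.cast_ne_zero.mpr hp.ne_zero
      simpa [norm_pos_iff] using this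
    refine ⟨‖(p : K)‖, hp0, hplt.le, ?_⟩
    intro n
    induction n using Nat.strong_induction_on with
    | _ n ih =>
      intro hn
      by_cases hdvd : p ∣ n
      · obtain ⟨m, rfl⟩ := hdvd
        have hm1 : 1 ≤ m := by
          rcases Nat.eq_zero_or_pos m with h0 | h0
          · simp [h0] at hn
          · exact h0
        have hmlt : m < p * m := by
          have := hp.two_le
          have h2 := hp.two_le
          nlinarith
        have ihm := ih m hmlt hm1
        have hlog : Nat.log 2 m + 1 ≤ Nat.log 2 (p * m) := by
          have h2m : 2 * m ≤ p * m := Nat.mul_le_mul_right m hp.two_le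
          calc Nat.log 2 m + 1 = Nat.log 2 (2 * m) := by
                rw [mul_comm, Nat.log_mul_base (by norm_num) (by omega)]
          _ ≤ Nat.log 2 (p * m) := Nat.log_mono_right h2m
        have : ‖(p : K)‖ ^ Nat.log 2 (p * m) ≤ ‖(p : K)‖ ^ (Nat.log 2 m + 1) :=
          pow_le_pow_of_le_one hp0.le hplt.le hlog
        calc ‖(p : K)‖ ^ Nat.log 2 (p * m) ≤ ‖(p : K)‖ ^ (Nat.log 2 m + 1) := this
        _ = ‖(p : K)‖ ^ Nat.log 2 m * ‖(p : K)‖ := by ring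
        _ ≤ ‖(m : K)‖ * ‖(p : K)‖ := by
              exact mul_le_mul_of_nonneg_right ihm hp0.le
        _ = ‖((p * m : ℕ) : K)‖ := by
              push_cast; rw [norm_mul]; ring
      · -- coprime case: norm is 1
        have hcop : IsCoprime (p : ℤ) (n : ℤ) := by
          have hcopn : Nat.Coprime p n := (hp.coprime_iff_not_dvd).mpr hdvd
          rw [Int.isCoprime_iff_gcd_eq_one]
          simpa [Int.gcd_natCast_natCast] using hcopn
        obtain ⟨u, v, huv⟩ := hcop
        have hK : (u : K) * (p : K) + (v : K) * (n : K) = 1 := by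
          have := congrArg (fun z : ℤ => (z : K)) huv
          push_cast at this
          simpa using this
        have h1 : (1:ℝ) ≤ max (‖(u:K)‖ * ‖(p:K)‖) (‖(v:K)‖ * ‖(n:K)‖) := by
          calc (1:ℝ) = ‖(1 : K)‖ := (norm_one).symm
          _ = ‖(u : K) * (p : K) + (v : K) * (n : K)‖ := by rw [hK]
          _ ≤ max ‖(u:K)*(p:K)‖ ‖(v:K)*(n:K)‖ := norm_add_le_max _ _
          _ = max (‖(u:K)‖ * ‖(p:K)‖) (‖(v:K)‖ * ‖(n:K)‖) := by rw [norm_mul, norm_mul]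
        have hu : ‖(u:K)‖ ≤ 1 := norm_intCast_le_one K u
        have hv : ‖(v:K)‖ ≤ 1 := norm_intCast_le_one K v
        have hup : ‖(u:K)‖ * ‖(p:K)‖ < 1 := by
          calc ‖(u:K)‖ * ‖(p:K)‖ ≤ 1 * ‖(p:K)‖ :=
                mul_le_mul_of_nonneg_right hu hp0.le
          _ = ‖(p:K)‖ := one_mul _
          _ < 1 := hplt
        have hn1 : (1:ℝ) ≤ ‖(n:K)‖ := by
          rcases max_cases (‖(u:K)‖ * ‖(p:K)‖) (‖(v:K)‖ * ‖(n:K)‖) with ⟨heq, _⟩ | ⟨heq, _⟩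
          · rw [heq] at h1; linarith
          · rw [heq] at h1
            calc (1:ℝ) ≤ ‖(v:K)‖ * ‖(n:K)‖ := h1
            _ ≤ 1 * ‖(n:K)‖ := mul_le_mul_of_nonneg_right hv (norm_nonneg _)
            _ = ‖(n:K)‖ := one_mul _
        calc ‖(p:K)‖ ^ Nat.log 2 n ≤ 1 := pow_le_one₀ hp0.le hplt.le
        _ ≤ ‖(n:K)‖ := hn1
  · push_neg at hp
    refine ⟨1, one_pos, le_refl _, ?_⟩
    intro n
    induction n using Nat.strong_induction_on with
    | _ n ih =>
      intro hn
      simp only [one_pow]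
      rcases eq_or_lt_of_le hn with h1 | h2
      · simp [← h1]
      · obtain ⟨p, hpp, hpdvd⟩ := Nat.exists_prime_and_dvd (by omega : n ≠ 1)
        obtain ⟨m, rfl⟩ := hpdvd
        have hm1 : 1 ≤ m := by
          rcases Nat.eq_zero_or_pos m with h0 | h0
          · simp [h0] at h2
          · exact h0
        have hmlt : m < p * m := by
          have := hpp.two_le
          nlinarith
        have hpn : ‖(p : K)‖ = 1 :=
          le_antisymm (norm_natCast_le_one K p) (hp p hpp)
        have ihm := ih m hmlt hm1
        simp only [one_pow] at ihm
        calc (1:ℝ) = 1 * 1 := (one_mul 1).symm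
        _ ≤ ‖(p:K)‖ * ‖(m:K)‖ := by rw [hpn]; exact mul_le_mul_of_nonneg_left ihm zero_le_one
        _ = ‖((p*m : ℕ) : K)‖ := by push_cast; rw [norm_mul]

/-- **Formal integration preserves overconvergent decay of coefficients**, at the cost of an
arbitrarily small shrinking of the radius: if `‖a n‖ * ρ ^ n → 0` then
`‖a n / (n + 1)‖ * ρ' ^ n → 0` for every `0 < ρ' < ρ`. -/
theorem formal_integration_overconvergent
    {K : Type*} [NormedField K] [IsUltrametricDist K] [CharZero K]
    (a : ℕ → K) (ρ : ℝ) (hρ : 0 < ρ)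
    (h : Tendsto (fun n : ℕ => ‖a n‖ * ρ ^ n) atTop (𝓝 0))
    (ρ' : ℝ) (hρ'₀ : 0 < ρ') (hρ' : ρ' < ρ) :
    Tendsto (fun n : ℕ => ‖a n / ((n + 1 : ℕ) : K)‖ * ρ' ^ n) atTop (𝓝 0) := by
  obtain ⟨c, hc0, hc1, hc⟩ := norm_nat_lower_bound (K := K)
  set r : ℝ := ρ' / ρ with hrdef
  have hr0 : 0 < r := div_pos hρ'₀ hρ
  have hr1 : r < 1 := (div_lt_one hρ).mpr hρ'
  obtain ⟨k, hk⟩ : ∃ k : ℕ, c⁻¹ < 2 ^ k := pow_unbounded_of_one_lt c⁻¹ one_lt_two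
  -- the dominating sequence
  have h2 : Tendsto (fun n : ℕ => ((n + 1 : ℕ) : ℝ) ^ k * r ^ n) atTop (𝓝 0) := by
    have hbase : Tendsto (fun n : ℕ => (n : ℝ) ^ k * r ^ n) atTop (𝓝 0) :=
      tendsto_pow_const_mul_const_pow_of_lt_one k hr0.le hr1
    have hcomp : Tendsto (fun n : ℕ => ((n + 1 : ℕ) : ℝ) ^ k * r ^ (n + 1)) atTop (𝓝 0) :=
      hbase.comp (tendsto_add_atTop_nat 1)
    have := hcomp.const_mul r⁻¹
    rw [mul_zero] at this
    refine this.congr fun n => ?_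
    field_simp [pow_succ]
    ring
  have hg : Tendsto (fun n : ℕ => (‖a n‖ * ρ ^ n) * (((n + 1 : ℕ) : ℝ) ^ k * r ^ n))
      atTop (𝓝 0) := by
    have := h.mul h2
    rwa [mul_zero] at this
  refine squeeze_zero (fun n => by positivity) (fun n => ?_) hg
  have hn1 : ((n + 1 : ℕ) : K) ≠ 0 := Nat.cast_ne_zero.mpr (Nat.succ_ne_zero n)
  have hnorm_pos : 0 < ‖((n + 1 : ℕ) : K)‖ := norm_pos_iff.mpr hn1
  -- key inverse bound
  have hinv : ‖((n + 1 : ℕ) : K)‖⁻¹ ≤ ((n + 1 : ℕ) : ℝ) ^ k := by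
    have hlow := hc (n + 1) (by omega)
    have h1 : ‖((n + 1 : ℕ) : K)‖⁻¹ ≤ (c ^ Nat.log 2 (n + 1))⁻¹ :=
      inv_anti₀ (by positivity) hlow
    have h2' : (c ^ Nat.log 2 (n + 1))⁻¹ = (c⁻¹) ^ Nat.log 2 (n + 1) := by
      rw [inv_pow]
    have h3 : (c⁻¹) ^ Nat.log 2 (n + 1) ≤ ((2 : ℝ) ^ k) ^ Nat.log 2 (n + 1) :=
      pow_le_pow_left₀ (by positivity) hk.le _
    have h4 : ((2 : ℝ) ^ k) ^ Nat.log 2 (n + 1) = ((2 : ℝ) ^ Nat.log 2 (n + 1)) ^ k := by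
      rw [← pow_mul, ← pow_mul, Nat.mul_comm]
    have h5 : ((2 : ℝ) ^ Nat.log 2 (n + 1)) ^ k ≤ ((n + 1 : ℕ) : ℝ) ^ k := by
      apply pow_le_pow_left₀ (by positivity)
      exact_mod_cast Nat.pow_log_le_self 2 (Nat.succ_ne_zero n)
    calc ‖((n + 1 : ℕ) : K)‖⁻¹ ≤ (c ^ Nat.log 2 (n + 1))⁻¹ := h1
    _ = (c⁻¹) ^ Nat.log 2 (n + 1) := h2'
    _ ≤ ((2 : ℝ) ^ k) ^ Nat.log 2 (n + 1) := h3
    _ = ((2 : ℝ) ^ Nat.log 2 (n + 1)) ^ k := h4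
    _ ≤ ((n + 1 : ℕ) : ℝ) ^ k := h5
  have hρ'_eq : ρ' = ρ * r := by rw [hrdef]; field_simp [hρ.ne']
  calc ‖a n / ((n + 1 : ℕ) : K)‖ * ρ' ^ n
      = (‖a n‖ * ρ ^ n) * (‖((n + 1 : ℕ) : K)‖⁻¹ * r ^ n) := by
        rw [norm_div, hρ'_eq, mul_pow]
        field_simp
  _ ≤ (‖a n‖ * ρ ^ n) * (((n + 1 : ℕ) : ℝ) ^ k * r ^ n) := by
        apply mul_le_mul_of_nonneg_left _ (by positivity)
        exact mul_le_mul_of_nonneg_right hinv (by positivity)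
end

section
/- Let 0 < γ' < γ ≤ δ < δ' be real numbers and let a : ℤ → K satisfy ‖a n‖ · (δ')^n → 0 as n → +∞ and ‖a n‖ · (γ')^n → 0 as n → −∞ (overconvergent decay for the annulus γ ≤ |T| ≤ δ). Define b : ℤ → K by b n = a n / ((n : ℤ) : K) for n ≠ 0 and b 0 = 0. Then for all reals γ'', δ'' with γ' < γ'' < γ and δ < δ'' < δ' one has ‖b n‖ · (δ'')^n → 0 as n → +∞ and ‖b n‖ · (γ'')^n → 0 as n → −∞. (Two-sided formal integration preserves overconvergence on annuli; this is the key convergence claim, step (i), in the proof of the paper's Lemma 2.1.) -/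
open Filter Topology

section Aux

variable {K : Type*} [NormedField K] [IsUltrametricDist K] [CharZero K]

lemma aux_unique_prime {p q : ℕ} (hp : p.Prime) (hq : q.Prime) (hpq : p ≠ q)
    (h1 : ‖(p : K)‖ < 1) (h2 : ‖(q : K)‖ < 1) : False := by
  have hcop : IsCoprime (p : ℤ) (q : ℤ) := by
    rw [Int.isCoprime_iff_gcd_eq_one]
    exact Nat.Coprime.gcd_eq_one ((Nat.coprime_primes hp hq).mpr hpq)
  obtain ⟨u, v, huv⟩ := hcop
  have key : (1 : K) = (u : K) * (p : K) + (v : K) * (q : K) := by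
    have := congrArg (fun z : ℤ => (z : K)) huv
    push_cast at this
    linear_combination this.symm
  have h1' : ‖(1 : K)‖ ≤ max (‖(u : K) * (p : K)‖) (‖(v : K) * (q : K)‖) := by
    rw [key]; exact IsUltrametricDist.norm_add_le_max _ _
  have hu : ‖(u : K)‖ ≤ 1 := IsUltrametricDist.norm_intCast_le_one K u
  have hv : ‖(v : K)‖ ≤ 1 := IsUltrametricDist.norm_intCast_le_one K v
  rw [norm_one] at h1'
  rcases le_max_iff.mp h1' with h | h
  · rw [norm_mul] at h
    nlinarith [norm_nonneg ((p : K)), norm_nonneg ((u : K))]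
  · rw [norm_mul] at h
    nlinarith [norm_nonneg ((q : K)), norm_nonneg ((v : K))]

lemma aux_norm_eq_one_of_not_dvd (p : ℕ)
    (hnorm : ∀ q : ℕ, q.Prime → q ≠ p → ‖(q : K)‖ = 1) :
    ∀ n : ℕ, 1 ≤ n → ¬ p ∣ n → ‖(n : K)‖ = 1 := by
  intro n
  induction n using Nat.strong_induction_on with
  | _ n ih =>
    intro hn hpn
    rcases eq_or_lt_of_le hn with h1 | h1
    · rw [← h1]; simp
    · have hqp : n.minFac.Prime := Nat.minFac_prime (by omega)
      have hqd : n.minFac ∣ n := Nat.minFac_dvd n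
      have hqne : n.minFac ≠ p := by rintro rfl; exact hpn hqd
      obtain ⟨m, hm⟩ := hqd
      have hm1 : 1 ≤ m := by
        rcases Nat.eq_zero_or_pos m with h | h
        · subst h; simp at hm; omega
        · exact h
      have hq2 := hqp.two_le
      have hmlt : m < n := by nlinarith
      have hpm : ¬ p ∣ m := fun h => hpn (hm ▸ h.mul_left n.minFac)
      have hrec := ih m hmlt hm1 hpm
      rw [hm, Nat.cast_mul, norm_mul, hnorm n.minFac hqp hqne, hrec, one_mul]

/-- Key lemma: there is `k` with `1 ≤ n^k * ‖(n : K)‖` for all `n ≥ 1`. -/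
lemma aux_exists_pow (K : Type*) [NormedField K] [IsUltrametricDist K] [CharZero K] :
    ∃ k : ℕ, ∀ n : ℕ, 1 ≤ n → (1 : ℝ) ≤ (n : ℝ) ^ k * ‖(n : K)‖ := by
  by_cases hS : ∃ p : ℕ, p.Prime ∧ ‖(p : K)‖ < 1
  · obtain ⟨p, hp, hplt⟩ := hS
    have hppos : (0 : ℝ) < ‖(p : K)‖ := by
      rw [norm_pos_iff]
      exact_mod_cast Nat.cast_ne_zero.mpr hp.ne_zero
    have hp2 := hp.two_le
    have hpR : (1 : ℝ) < (p : ℝ) := by exact_mod_cast hp.one_lt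
    -- choose k with (1/p)^k ≤ ‖p‖
    obtain ⟨k, hk⟩ := exists_pow_lt_of_lt_one hppos
      (show (1 / (p : ℝ)) < 1 by rw [div_lt_one (by linarith)]; linarith)
    have hnorm : ∀ q : ℕ, q.Prime → q ≠ p → ‖(q : K)‖ = 1 := by
      intro q hq hqp
      refine le_antisymm (IsUltrametricDist.norm_natCast_le_one K q) ?_
      by_contra h
      push_neg at h
      exact aux_unique_prime hq hp hqp h hplt
    refine ⟨k, fun n hn => ?_⟩
    set v := n.factorization p with hv
    have hfact : ‖(n : K)‖ = ‖(p : K)‖ ^ v := by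
      conv_lhs => rw [← Nat.ordProj_mul_ordCompl_eq_self n p]
      rw [Nat.cast_mul, norm_mul, Nat.cast_pow, norm_pow]
      have hm1 : 1 ≤ n / p ^ v := Nat.ordCompl_pos p (by omega)
      have hmnd : ¬ p ∣ n / p ^ v := Nat.not_dvd_ordCompl hp (by omega)
      rw [aux_norm_eq_one_of_not_dvd p hnorm _ hm1 hmnd, mul_one]
    have hple : (p : ℝ) ^ v ≤ (n : ℝ) := by
      exact_mod_cast Nat.ordProj_le p (show n ≠ 0 by omega)
    have hpvpos : (0 : ℝ) < (p : ℝ) ^ v := by positivity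
    have hnpos : (0 : ℝ) < (n : ℝ) := by exact_mod_cast hn
    -- ‖p‖^v ≥ ((1/p)^k)^v = (1/p^v)^k ≥ (1/n)^k
    have step1 : ((1 / (p : ℝ)) ^ k) ^ v ≤ ‖(p : K)‖ ^ v :=
      pow_le_pow_left₀ (by positivity) hk.le v
    have step2 : ((1 / (n : ℝ))) ^ k ≤ ((1 / (p : ℝ)) ^ k) ^ v := by
      rw [← pow_mul, mul_comm, pow_mul]
      refine pow_le_pow_left₀ (by positivity) ?_ k
      rw [div_pow, one_pow, div_le_div_iff₀ hnpos (by positivity), one_mul, one_mul]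
      exact hple
    have hfinal : (1 / (n : ℝ)) ^ k ≤ ‖(n : K)‖ := by
      rw [hfact]; exact step2.trans step1
    calc (1 : ℝ) = (n : ℝ) ^ k * (1 / (n : ℝ)) ^ k := by
          rw [← mul_pow, mul_one_div, div_self hnpos.ne', one_pow]
      _ ≤ (n : ℝ) ^ k * ‖(n : K)‖ := by
          exact mul_le_mul_of_nonneg_left hfinal (by positivity)
  · push_neg at hS
    refine ⟨0, fun n hn => ?_⟩
    have hnorm : ∀ q : ℕ, q.Prime → q ≠ 0 → ‖(q : K)‖ = 1 := fun q hq _ =>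
      le_antisymm (IsUltrametricDist.norm_natCast_le_one K q) (hS q hq)
    have : ‖(n : K)‖ = 1 :=
      aux_norm_eq_one_of_not_dvd 0 (fun q hq _ => hnorm q hq hq.ne_zero) n hn
        (by simpa using (by omega : n ≠ 0))
    rw [this]; simp

lemma aux_toNat_tendsto : Tendsto Int.toNat atTop atTop := by
  apply tendsto_atTop_atTop.mpr
  intro m
  exact ⟨(m : ℤ), fun a ha => by omega⟩

/-- helper: if `‖c n‖ r^n → 0` then `(‖c n‖/‖n‖) s^n → 0` for `0 < s < r`. -/
lemma aux_tendsto {K : Type*} [NormedField K] [IsUltrametricDist K] [CharZero K]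
    (c : ℤ → K) (r s : ℝ) (hs : 0 < s) (hsr : s < r)
    (hc : Tendsto (fun n : ℤ => ‖c n‖ * r ^ n) atTop (𝓝 0)) :
    Tendsto (fun n : ℤ => ‖c n‖ / ‖((n : ℤ) : K)‖ * s ^ n) atTop (𝓝 0) := by
  obtain ⟨k, hk⟩ := aux_exists_pow K
  have hr : (0 : ℝ) < r := hs.trans hsr
  set ρ := s / r with hρ
  have hρ0 : 0 < ρ := by positivity
  have hρ1 : ρ < 1 := by rw [hρ, div_lt_one hr]; exact hsr
  -- nat version
  have hnat : Tendsto (fun m : ℕ => (m : ℝ) ^ k * ρ ^ m) atTop (𝓝 0) := by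
    have hsum : Summable (fun m : ℕ => (m : ℝ) ^ k * ρ ^ m) := by
      have := summable_pow_mul_geometric_of_norm_lt_one (R := ℝ) k
        (r := ρ) (by rw [Real.norm_eq_abs, abs_of_pos hρ0]; exact hρ1)
      exact this
    exact hsum.tendsto_atTop_zero
  have h2 : Tendsto (fun n : ℤ => ((n.toNat : ℝ)) ^ k * ρ ^ n) atTop (𝓝 0) := by
    have := hnat.comp aux_toNat_tendsto
    apply this.congr'
    filter_upwards [eventually_ge_atTop (0 : ℤ)] with n hn
    simp only [Function.comp]
    have : ρ ^ n = ρ ^ (n.toNat) := by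
      rw [← zpow_natCast ρ n.toNat, Int.toNat_of_nonneg hn]
    rw [this]
  have hg : Tendsto (fun n : ℤ => (‖c n‖ * r ^ n) * (((n.toNat : ℝ)) ^ k * ρ ^ n))
      atTop (𝓝 0) := by
    simpa using hc.mul h2
  apply squeeze_zero' ?_ ?_ hg
  · filter_upwards with n
    have : (0:ℝ) ≤ s ^ n := le_of_lt (zpow_pos hs n)
    positivity
  · filter_upwards [eventually_ge_atTop (1 : ℤ)] with n hn
    have hn0 : ((n : ℤ) : K) ≠ 0 := Int.cast_ne_zero.mpr (by omega)
    have hnK : (0 : ℝ) < ‖((n : ℤ) : K)‖ := norm_pos_iff.mpr hn0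
    have hcast : ((n.toNat : ℕ) : K) = ((n : ℤ) : K) := by
      rw [← Int.cast_natCast, Int.toNat_of_nonneg (by omega)]
    have hkey : (1 : ℝ) ≤ ((n.toNat : ℝ)) ^ k * ‖((n : ℤ) : K)‖ := by
      rw [← hcast]
      exact hk n.toNat (by omega)
    have hdiv : ‖c n‖ / ‖((n : ℤ) : K)‖ ≤ ‖c n‖ * ((n.toNat : ℝ)) ^ k := by
      rw [div_le_iff₀ hnK]
      calc ‖c n‖ = ‖c n‖ * 1 := (mul_one _).symm
        _ ≤ ‖c n‖ * (((n.toNat : ℝ)) ^ k * ‖((n : ℤ) : K)‖) :=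
            mul_le_mul_of_nonneg_left hkey (norm_nonneg _)
        _ = ‖c n‖ * ((n.toNat : ℝ)) ^ k * ‖((n : ℤ) : K)‖ := by ring
    have hsn : (0 : ℝ) < s ^ n := zpow_pos hs n
    calc ‖c n‖ / ‖((n : ℤ) : K)‖ * s ^ n
        ≤ (‖c n‖ * ((n.toNat : ℝ)) ^ k) * s ^ n :=
          mul_le_mul_of_nonneg_right hdiv hsn.le
      _ = (‖c n‖ * r ^ n) * (((n.toNat : ℝ)) ^ k * ρ ^ n) := by
          rw [hρ, div_zpow]
          field_simp
  

end Aux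

/-- **Two-sided formal integration preserves overconvergence on annuli** (step (i) in the proof of
Lemma 2.1 of the paper): if the Laurent coefficients `a : ℤ → K` satisfy
`‖a n‖ * δ'^n → 0` as `n → +∞` and `‖a n‖ * γ'^n → 0` as `n → −∞` (overconvergent decay for the
annulus `γ ≤ |T| ≤ δ`, where `0 < γ' < γ ≤ δ < δ'`), and `b n = a n / n` for `n ≠ 0`, `b 0 = 0`,
then for all `γ' < γ'' < γ` and `δ < δ'' < δ'` one has `‖b n‖ * δ''^n → 0` as `n → +∞` and
`‖b n‖ * γ''^n → 0` as `n → −∞`. -/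
theorem laurent_formal_integration_overconvergent
    {K : Type*} [NormedField K] [IsUltrametricDist K] [CharZero K]
    (γ' γ δ δ' : ℝ) (h₁ : 0 < γ') (h₂ : γ' < γ) (h₃ : γ ≤ δ) (h₄ : δ < δ')
    (a : ℤ → K)
    (haTop : Tendsto (fun n : ℤ => ‖a n‖ * δ' ^ n) atTop (𝓝 0))
    (haBot : Tendsto (fun n : ℤ => ‖a n‖ * γ' ^ n) atBot (𝓝 0))
    (b : ℤ → K) (hb : ∀ n : ℤ, b n = if n = 0 then 0 else a n / ((n : ℤ) : K))
    (γ'' δ'' : ℝ) (hγ''₁ : γ' < γ'') (hγ''₂ : γ'' < γ) (hδ''₁ : δ < δ'') (hδ''₂ : δ'' < δ') :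
    Tendsto (fun n : ℤ => ‖b n‖ * δ'' ^ n) atTop (𝓝 0) ∧
      Tendsto (fun n : ℤ => ‖b n‖ * γ'' ^ n) atBot (𝓝 0) := by
  have hδ''pos : (0 : ℝ) < δ'' := by linarith
  have hγ''pos : (0 : ℝ) < γ'' := by linarith
  constructor
  · have := aux_tendsto a δ' δ'' hδ''pos hδ''₂ haTop
    apply this.congr'
    filter_upwards [eventually_ge_atTop (1 : ℤ)] with n hn
    rw [hb n, if_neg (by omega), norm_div]
  · -- bottom part
    have hstep1 : Tendsto (fun m : ℤ => ‖a (-m)‖ * (γ'⁻¹) ^ m) atTop (𝓝 0) := by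
      have := haBot.comp (tendsto_neg_atTop_atBot (G := ℤ))
      apply this.congr
      intro m
      simp only [Function.comp]
      rw [zpow_neg, inv_zpow]
    have hstep2 := aux_tendsto (fun m => a (-m)) γ'⁻¹ γ''⁻¹
      (by positivity) (by exact inv_strictAnti₀ h₁ hγ''₁) hstep1
    have hstep3 : Tendsto (fun m : ℤ => ‖b (-m)‖ * γ'' ^ (-m)) atTop (𝓝 0) := by
      apply hstep2.congr'
      filter_upwards [eventually_ge_atTop (1 : ℤ)] with m hm
      rw [hb (-m), if_neg (by omega), norm_div, zpow_neg, inv_zpow]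
      congr 2
      rw [Int.cast_neg, norm_neg]
    have := hstep3.comp (tendsto_neg_atBot_atTop (G := ℤ))
    apply this.congr
    intro n
    simp [Function.comp]
end

section
/- Fix a real δ > 0 and let W† = {a : ℕ → K | there exists a real ρ > δ with ‖a n‖ · ρ^n → 0 as n → ∞}, the coefficient model of the ring of overconvergent (dagger) functions on the closed disk of radius δ; it is a K-submodule of ℕ → K. Then the formal derivative D maps W† into W†, the map D : W† → W† is surjective, and its kernel consists exactly of the sequences a with a n = 0 for all n ≥ 1. (Equivalently: the closed dagger disk has H⁰_dR = K and H¹_dR = 0; this is the r = 0, n = 1 case of the paper's Lemma 2.1(a).) -/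
open Filter Topology

lemma norm_natCast_inv_le_pow
    (K : Type*) [NormedField K] [IsUltrametricDist K] [CharZero K] :
    ∃ k : ℕ, ∀ m : ℕ, 1 ≤ m → ‖((m : ℕ) : K)‖⁻¹ ≤ (m : ℝ) ^ k := by
  -- Step 1: there is a prime p₀ such that every other prime has norm 1.
  obtain ⟨p₀, hp₀, hothers⟩ : ∃ p₀ : ℕ, p₀.Prime ∧ ∀ q : ℕ, q.Prime → q ≠ p₀ → ‖((q : ℕ) : K)‖ = 1 := by
    by_cases h : ∃ p : ℕ, p.Prime ∧ ‖((p : ℕ) : K)‖ < 1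
    · obtain ⟨p, hp, hplt⟩ := h
      refine ⟨p, hp, fun q hq hqp => ?_⟩
      refine le_antisymm (IsUltrametricDist.norm_natCast_le_one K q) ?_
      by_contra hlt
      push_neg at hlt
      have hcop : IsCoprime (q : ℤ) (p : ℤ) :=
        Int.isCoprime_iff_gcd_eq_one.mpr (by exact_mod_cast (Nat.coprime_primes hq hp).mpr hqp)
      obtain ⟨a, b, hab⟩ := hcop
      have hcast : (a : K) * (q : K) + (b : K) * (p : K) = 1 := by
        have := congrArg (fun z : ℤ => ((z : K))) hab
        push_cast at this
        simpa using this
      have h1 : (1 : ℝ) ≤ max (‖(a : K) * (q : K)‖) (‖(b : K) * (p : K)‖) := by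
        calc (1 : ℝ) = ‖(1 : K)‖ := by simp
        _ = ‖(a : K) * (q : K) + (b : K) * (p : K)‖ := by rw [hcast]
        _ ≤ _ := IsUltrametricDist.norm_add_le_max _ _
      have ha1 : ‖(a : K) * (q : K)‖ < 1 := by
        rw [norm_mul]
        calc ‖(a : K)‖ * ‖((q:ℕ) : K)‖ ≤ 1 * ‖((q:ℕ) : K)‖ :=
          mul_le_mul_of_nonneg_right (IsUltrametricDist.norm_intCast_le_one K a) (norm_nonneg _)
        _ < 1 := by simpa using hlt
      have hb1 : ‖(b : K) * (p : K)‖ < 1 := by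
        rw [norm_mul]
        calc ‖(b : K)‖ * ‖((p:ℕ) : K)‖ ≤ 1 * ‖((p:ℕ) : K)‖ :=
          mul_le_mul_of_nonneg_right (IsUltrametricDist.norm_intCast_le_one K b) (norm_nonneg _)
        _ < 1 := by simpa using hplt
      rcases max_lt ha1 hb1 with hcontra
      linarith [h1]
    · push_neg at h
      exact ⟨2, Nat.prime_two, fun q hq _ =>
        le_antisymm (IsUltrametricDist.norm_natCast_le_one K q) (h q hq)⟩
  set t : ℝ := ‖((p₀ : ℕ) : K)‖ with ht_def
  have hp₀2 : 2 ≤ p₀ := hp₀.two_le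
  have ht0 : 0 < t := by
    rw [ht_def]
    apply norm_pos_iff.mpr
    exact_mod_cast Nat.cast_ne_zero.mpr hp₀.pos.ne'
  have ht1 : t ≤ 1 := IsUltrametricDist.norm_natCast_le_one K p₀
  -- Step 2: ‖m‖ ≥ t ^ (v_{p₀} m) for m ≥ 1, by strong induction.
  have key : ∀ m : ℕ, 1 ≤ m → t ^ (m.factorization p₀) ≤ ‖((m : ℕ) : K)‖ := by
    intro m
    induction m using Nat.strong_induction_on with
    | _ m ih =>
      intro hm
      rcases eq_or_lt_of_le hm with h1 | h2
      · simp [← h1]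
      · -- m ≥ 2
        set q := m.minFac with hq_def
        have hq : q.Prime := Nat.minFac_prime (by omega)
        have hdvd : q ∣ m := Nat.minFac_dvd m
        obtain ⟨c, hc⟩ := hdvd
        have hc1 : 1 ≤ c := by
          rcases Nat.eq_zero_or_pos c with h0 | h0
          · subst h0; simp at hc; omega
          · exact h0
        have hclt : c < m := by
          have := hq.two_le
          nlinarith
        have hfact : m.factorization p₀ = q.factorization p₀ + c.factorization p₀ := by
          rw [hc, Nat.factorization_mul hq.pos.ne' (by omega)]
          simp
        have hqbound : t ^ (q.factorization p₀) ≤ ‖((q : ℕ) : K)‖ := by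
          by_cases hqp : q = p₀
          · subst hqp
            simp [Nat.Prime.factorization_self hq, ht_def]
          · rw [hothers q hq hqp]
            have : q.factorization p₀ = 0 := by
              simp [hq.factorization, Finsupp.single_apply, hqp]
            simp [this]
        have hcbound : t ^ (c.factorization p₀) ≤ ‖((c : ℕ) : K)‖ := ih c hclt hc1
        calc t ^ (m.factorization p₀) = t ^ (q.factorization p₀) * t ^ (c.factorization p₀) := by
              rw [hfact, pow_add]
        _ ≤ ‖((q : ℕ) : K)‖ * ‖((c : ℕ) : K)‖ :=
            mul_le_mul hqbound hcbound (pow_nonneg ht0.le _) (norm_nonneg _)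
        _ = ‖((m : ℕ) : K)‖ := by rw [hc]; push_cast; rw [norm_mul]
  -- Step 3: choose k with t⁻¹ ≤ 2 ^ k.
  obtain ⟨k, hk⟩ : ∃ k : ℕ, t⁻¹ < (2 : ℝ) ^ k := pow_unbounded_of_one_lt t⁻¹ one_lt_two
  have htinv1 : (1 : ℝ) ≤ t⁻¹ := by rw [le_inv_comm₀ one_pos ht0]; simpa using ht1
  refine ⟨k, fun m hm => ?_⟩
  have hm0 : m ≠ 0 := by omega
  have hnorm_pos : (0 : ℝ) < ‖((m : ℕ) : K)‖ := by
    apply norm_pos_iff.mpr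
    exact_mod_cast Nat.cast_ne_zero.mpr hm0
  have h1 : ‖((m : ℕ) : K)‖⁻¹ ≤ (t ^ (m.factorization p₀))⁻¹ :=
    inv_anti₀ (pow_pos ht0 _) (key m hm)
  have hvlog : m.factorization p₀ ≤ Nat.log 2 m := by
    have h2 : p₀ ^ (m.factorization p₀) ≤ m := Nat.ordProj_le p₀ hm0
    have h3 : m.factorization p₀ ≤ Nat.log p₀ m :=
      (Nat.le_log_iff_pow_le hp₀.one_lt hm0).mpr h2
    exact h3.trans (Nat.log_anti_left (by norm_num) hp₀2)
  calc ‖((m : ℕ) : K)‖⁻¹ ≤ (t ^ (m.factorization p₀))⁻¹ := h1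
  _ = (t⁻¹) ^ (m.factorization p₀) := by rw [inv_pow]
  _ ≤ (t⁻¹) ^ (Nat.log 2 m) := pow_le_pow_right₀ htinv1 hvlog
  _ ≤ ((2 : ℝ) ^ k) ^ (Nat.log 2 m) := pow_le_pow_left₀ (by positivity) hk.le _
  _ = ((2 : ℝ) ^ (Nat.log 2 m)) ^ k := by rw [← pow_mul, ← pow_mul, Nat.mul_comm]
  _ ≤ (m : ℝ) ^ k := by
      apply pow_le_pow_left₀ (by positivity)
      exact_mod_cast Nat.pow_log_le_self 2 hm0


/-- The coefficient model of the ring of overconvergent (dagger) functions on the closed disk of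
radius `δ`: sequences `a : ℕ → K` such that `‖a n‖ * ρ ^ n → 0` for some radius `ρ > δ`.  It is a
`K`-submodule of `ℕ → K`. -/
def DaggerDisk (K : Type*) [NormedField K] (δ : ℝ) (hδ : 0 < δ) : Submodule K (ℕ → K) where
  carrier := {a | ∃ ρ : ℝ, δ < ρ ∧ Tendsto (fun n : ℕ => ‖a n‖ * ρ ^ n) atTop (𝓝 0)}
  zero_mem' := by
    refine ⟨δ + 1, by linarith, ?_⟩
    simp
  add_mem' := by
    rintro a b ⟨ρa, hρa, ha⟩ ⟨ρb, hρb, hb⟩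
    refine ⟨min ρa ρb, lt_min hρa hρb, ?_⟩
    have hmin : 0 < min ρa ρb := lt_min (hδ.trans hρa) (hδ.trans hρb)
    have ha' : Tendsto (fun n : ℕ => ‖a n‖ * (min ρa ρb) ^ n) atTop (𝓝 0) :=
      squeeze_zero (fun n => mul_nonneg (norm_nonneg _) (pow_nonneg hmin.le n))
        (fun n => mul_le_mul_of_nonneg_left
          (pow_le_pow_left₀ hmin.le (min_le_left _ _) n) (norm_nonneg _)) ha
    have hb' : Tendsto (fun n : ℕ => ‖b n‖ * (min ρa ρb) ^ n) atTop (𝓝 0) :=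
      squeeze_zero (fun n => mul_nonneg (norm_nonneg _) (pow_nonneg hmin.le n))
        (fun n => mul_le_mul_of_nonneg_left
          (pow_le_pow_left₀ hmin.le (min_le_right _ _) n) (norm_nonneg _)) hb
    refine squeeze_zero (fun n => mul_nonneg (norm_nonneg _) (pow_nonneg hmin.le n))
      (fun n => ?_) (by simpa using ha'.add hb')
    have h3 : ‖(a + b) n‖ * (min ρa ρb) ^ n ≤ (‖a n‖ + ‖b n‖) * (min ρa ρb) ^ n :=
      mul_le_mul_of_nonneg_right (norm_add_le _ _) (pow_nonneg hmin.le n)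
    simpa [add_mul] using h3
  smul_mem' := by
    rintro c a ⟨ρa, hρa, ha⟩
    exact ⟨ρa, hρa, by simpa [norm_mul, mul_assoc] using ha.const_mul ‖c‖⟩

/-- **The closed dagger disk has `H⁰_dR = K` and `H¹_dR = 0`** (the `r = 0`, `n = 1` case of
Lemma 2.1(a) of the paper): the formal derivative maps the ring of overconvergent functions on
the closed disk of radius `δ` into itself, it is surjective on it, and its kernel consists exactly
of the constants, i.e. of the sequences vanishing in all degrees `≥ 1`. -/
theorem daggerDisk_deRham
    (K : Type*) [NormedField K] [IsUltrametricDist K] [CharZero K]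
    (δ : ℝ) (hδ : 0 < δ) :
    (∀ a ∈ DaggerDisk K δ hδ, DerN K a ∈ DaggerDisk K δ hδ) ∧
      (∀ b ∈ DaggerDisk K δ hδ, ∃ a ∈ DaggerDisk K δ hδ, DerN K a = b) ∧
      (∀ a ∈ DaggerDisk K δ hδ, (DerN K a = 0 ↔ ∀ n : ℕ, 1 ≤ n → a n = 0)) := by
  classical
  obtain ⟨k, hk⟩ := norm_natCast_inv_le_pow K
  refine ⟨?_, ?_, ?_⟩
  · -- D preserves the dagger disk
    rintro a ⟨ρ, hρ, ha⟩
    refine ⟨ρ, hρ, ?_⟩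
    have hρ0 : (0:ℝ) < ρ := hδ.trans hρ
    have ha' : Tendsto (fun n : ℕ => ‖a (n+1)‖ * ρ ^ (n+1) * ρ⁻¹) atTop (𝓝 0) := by
      have := ((tendsto_add_atTop_iff_nat 1).mpr ha).mul_const ρ⁻¹
      simpa using this
    refine squeeze_zero (fun n => mul_nonneg (norm_nonneg _) (pow_nonneg hρ0.le n))
      (fun n => ?_) ha'
    show ‖((n + 1 : ℕ) : K) * a (n+1)‖ * ρ ^ n ≤ ‖a (n+1)‖ * ρ ^ (n+1) * ρ⁻¹
    rw [norm_mul]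
    have h1 : ‖((n + 1 : ℕ) : K)‖ * ‖a (n+1)‖ ≤ ‖a (n+1)‖ := by
      calc ‖((n + 1 : ℕ) : K)‖ * ‖a (n+1)‖ ≤ 1 * ‖a (n+1)‖ :=
        mul_le_mul_of_nonneg_right (IsUltrametricDist.norm_natCast_le_one K _) (norm_nonneg _)
      _ = ‖a (n+1)‖ := one_mul _
    calc ‖((n + 1 : ℕ) : K)‖ * ‖a (n+1)‖ * ρ ^ n ≤ ‖a (n+1)‖ * ρ ^ n :=
        mul_le_mul_of_nonneg_right h1 (pow_nonneg hρ0.le n)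
    _ = ‖a (n+1)‖ * ρ ^ (n+1) * ρ⁻¹ := by
        rw [pow_succ]; field_simp
  · -- D is surjective
    rintro b ⟨ρ, hρ, hb⟩
    have hρ0 : (0:ℝ) < ρ := hδ.trans hρ
    set a : ℕ → K := fun n => Nat.rec 0 (fun m _ => b m / ((m + 1 : ℕ) : K)) n with ha_def
    have ha_succ : ∀ m : ℕ, a (m + 1) = b m / ((m + 1 : ℕ) : K) := fun m => rfl
    have hcast_ne : ∀ m : ℕ, ((m + 1 : ℕ) : K) ≠ 0 := fun m =>
      Nat.cast_ne_zero.mpr (Nat.succ_ne_zero m)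
    refine ⟨a, ?_, ?_⟩
    · -- a is in the dagger disk
      set ρ' : ℝ := (δ + ρ) / 2 with hρ'_def
      have hρ'1 : δ < ρ' := by rw [hρ'_def]; linarith
      have hρ'2 : ρ' < ρ := by rw [hρ'_def]; linarith
      have hρ'0 : (0:ℝ) < ρ' := hδ.trans hρ'1
      refine ⟨ρ', hρ'1, ?_⟩
      set r : ℝ := ρ' / ρ with hr_def
      have hr0 : (0:ℝ) ≤ r := by positivity
      have hr1 : r < 1 := (div_lt_one hρ0).mpr hρ'2
      have hρ'eq : ρ' = ρ * r := by rw [hr_def]; field_simp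
      have hgeo : Tendsto (fun m : ℕ => ((m + 1 : ℕ) : ℝ) ^ k * r ^ (m + 1)) atTop (𝓝 0) := by
        have h0 : Tendsto (fun n : ℕ => (n : ℝ) ^ k * r ^ n) atTop (𝓝 0) :=
          tendsto_pow_const_mul_const_pow_of_lt_one k hr0 hr1
        have h1 : Tendsto (fun n : ℕ => ((n + 1 : ℕ) : ℝ) ^ k * r ^ (n + 1)) atTop (𝓝 0) :=
          (tendsto_add_atTop_iff_nat (f := fun n : ℕ => (n : ℝ) ^ k * r ^ n) 1).mpr h0
        exact h1
      have hprod : Tendsto (fun m : ℕ =>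
          (‖b m‖ * ρ ^ m) * (ρ * (((m + 1 : ℕ) : ℝ) ^ k * r ^ (m + 1)))) atTop (𝓝 0) := by
        have := hb.mul (hgeo.const_mul ρ)
        simpa using this
      have hsq : Tendsto (fun m : ℕ => ‖a (m + 1)‖ * ρ' ^ (m + 1)) atTop (𝓝 0) := by
        refine squeeze_zero (fun m => mul_nonneg (norm_nonneg _) (pow_nonneg hρ'0.le _))
          (fun m => ?_) hprod
        rw [ha_succ, norm_div]
        have hbd : ‖((m + 1 : ℕ) : K)‖⁻¹ ≤ ((m + 1 : ℕ) : ℝ) ^ k := hk (m + 1) (by omega)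
        calc ‖b m‖ / ‖((m + 1 : ℕ) : K)‖ * ρ' ^ (m + 1)
            = ‖b m‖ * ‖((m + 1 : ℕ) : K)‖⁻¹ * ρ' ^ (m + 1) := by rw [div_eq_mul_inv]
        _ ≤ ‖b m‖ * ((m + 1 : ℕ) : ℝ) ^ k * ρ' ^ (m + 1) := by
            apply mul_le_mul_of_nonneg_right _ (pow_nonneg hρ'0.le _)
            exact mul_le_mul_of_nonneg_left hbd (norm_nonneg _)
        _ = (‖b m‖ * ρ ^ m) * (ρ * (((m + 1 : ℕ) : ℝ) ^ k * r ^ (m + 1))) := by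
            rw [hρ'eq, mul_pow]; ring
      exact (tendsto_add_atTop_iff_nat 1).mp (by simpa using hsq)
    · -- D a = b
      funext n
      show ((n + 1 : ℕ) : K) * a (n + 1) = b n
      rw [ha_succ, mul_div_cancel₀ _ (hcast_ne n)]
  · -- kernel = constants
    rintro a ⟨ρ, hρ, ha⟩
    constructor
    · intro h n hn
      obtain ⟨m, rfl⟩ := Nat.exists_eq_add_of_le hn
      have h1 : ((m + 1 : ℕ) : K) * a (m + 1) = 0 := congrFun h m
      have h2 : ((m + 1 : ℕ) : K) ≠ 0 := Nat.cast_ne_zero.mpr (Nat.succ_ne_zero m)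
      have := (mul_eq_zero.mp h1).resolve_left h2
      simpa [add_comm] using this
    · intro h
      funext n
      show ((n + 1 : ℕ) : K) * a (n + 1) = 0
      rw [h (n + 1) (by omega), mul_zero]
end

section
/- Fix reals 0 < γ ≤ δ and let W† = {a : ℤ → K | there exist reals γ', δ' with 0 < γ' < γ and δ < δ' such that ‖a n‖ · (δ')^n → 0 as n → +∞ and ‖a n‖ · (γ')^n → 0 as n → −∞}, the coefficient model of the ring of overconvergent (dagger) functions on the closed annulus γ ≤ |T| ≤ δ. Then the formal derivative D maps W† into W†, an element a ∈ W† lies in the range of D : W† → W† if and only if a(−1) = 0, and the quotient K-vector space W† ⧸ range(D) is one-dimensional, spanned by the class of the indicator sequence of −1 (i.e. the class of the differential dT/T). (This is the n = r = 1 case of the paper's Lemma 2.1(a): H¹_dR of the dagger annulus is spanned by dT/T.) -/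
open Filter Topology

private lemma zpow_le_zpow_base {x y : ℝ} (hx : 0 < x) (hxy : x ≤ y) {n : ℤ}
    (hn : 0 ≤ n) : x ^ n ≤ y ^ n := by
  lift n to ℕ using hn
  simpa [zpow_natCast] using pow_le_pow_left₀ hx.le hxy n

private lemma zpow_anti_base {x y : ℝ} (hx : 0 < x) (hxy : x ≤ y) {n : ℤ}
    (hn : n ≤ 0) : y ^ n ≤ x ^ n := by
  obtain ⟨m, rfl⟩ := Int.exists_eq_neg_ofNat hn
  rw [zpow_neg, zpow_neg, zpow_natCast, zpow_natCast]
  exact inv_anti₀ (pow_pos hx m) (pow_le_pow_left₀ hx.le hxy m)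

/-- The coefficient model of the ring of overconvergent (dagger) functions on the closed annulus
`γ ≤ |T| ≤ δ`: two-sided sequences `a : ℤ → K` admitting radii `0 < γ' < γ` and `δ' > δ` with
`‖a n‖ * δ'^n → 0` as `n → +∞` and `‖a n‖ * γ'^n → 0` as `n → −∞`.  It is a `K`-submodule of
`ℤ → K`. -/
def DaggerAnnulus (K : Type*) [NormedField K] (γ δ : ℝ) (hγ : 0 < γ) (hγδ : γ ≤ δ) :
    Submodule K (ℤ → K) where
  carrier := {a | ∃ γ' δ' : ℝ, 0 < γ' ∧ γ' < γ ∧ δ < δ' ∧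
    Tendsto (fun n : ℤ => ‖a n‖ * δ' ^ n) atTop (𝓝 0) ∧
    Tendsto (fun n : ℤ => ‖a n‖ * γ' ^ n) atBot (𝓝 0)}
  zero_mem' := by
    refine ⟨γ / 2, δ + 1, half_pos hγ, half_lt_self hγ, by linarith, ?_, ?_⟩ <;> simp
  add_mem' := by
    rintro a b ⟨ga, da, hga0, hga, hda, haT, haB⟩ ⟨gb, db, hgb0, hgb, hdb, hbT, hbB⟩
    have hδ0 : 0 < δ := lt_of_lt_of_le hγ hγδ
    have hg0 : 0 < max ga gb := lt_of_lt_of_le hga0 (le_max_left _ _)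
    have hd0 : 0 < min da db := lt_trans hδ0 (lt_min hda hdb)
    refine ⟨max ga gb, min da db, hg0, max_lt hga hgb, lt_min hda hdb, ?_, ?_⟩
    · have ha' : Tendsto (fun n : ℤ => ‖a n‖ * (min da db) ^ n) atTop (𝓝 0) := by
        refine squeeze_zero'
          (Eventually.of_forall fun n => mul_nonneg (norm_nonneg _) (zpow_nonneg hd0.le n))
          ?_ haT
        filter_upwards [eventually_ge_atTop (0 : ℤ)] with n hn
        exact mul_le_mul_of_nonneg_left
          (zpow_le_zpow_base hd0 (min_le_left _ _) hn) (norm_nonneg _)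
      have hb' : Tendsto (fun n : ℤ => ‖b n‖ * (min da db) ^ n) atTop (𝓝 0) := by
        refine squeeze_zero'
          (Eventually.of_forall fun n => mul_nonneg (norm_nonneg _) (zpow_nonneg hd0.le n))
          ?_ hbT
        filter_upwards [eventually_ge_atTop (0 : ℤ)] with n hn
        exact mul_le_mul_of_nonneg_left
          (zpow_le_zpow_base hd0 (min_le_right _ _) hn) (norm_nonneg _)
      refine squeeze_zero
        (fun n => mul_nonneg (norm_nonneg _) (zpow_nonneg hd0.le n))
        (fun n => ?_) (by simpa using ha'.add hb')
      have h3 : ‖(a + b) n‖ * (min da db) ^ n ≤ (‖a n‖ + ‖b n‖) * (min da db) ^ n :=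
        mul_le_mul_of_nonneg_right (norm_add_le _ _) (zpow_nonneg hd0.le n)
      simpa [add_mul] using h3
    · have ha' : Tendsto (fun n : ℤ => ‖a n‖ * (max ga gb) ^ n) atBot (𝓝 0) := by
        refine squeeze_zero'
          (Eventually.of_forall fun n => mul_nonneg (norm_nonneg _) (zpow_nonneg hg0.le n))
          ?_ haB
        filter_upwards [eventually_le_atBot (0 : ℤ)] with n hn
        exact mul_le_mul_of_nonneg_left
          (zpow_anti_base hga0 (le_max_left _ _) hn) (norm_nonneg _)
      have hb' : Tendsto (fun n : ℤ => ‖b n‖ * (max ga gb) ^ n) atBot (𝓝 0) := by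
        refine squeeze_zero'
          (Eventually.of_forall fun n => mul_nonneg (norm_nonneg _) (zpow_nonneg hg0.le n))
          ?_ hbB
        filter_upwards [eventually_le_atBot (0 : ℤ)] with n hn
        exact mul_le_mul_of_nonneg_left
          (zpow_anti_base hgb0 (le_max_right _ _) hn) (norm_nonneg _)
      refine squeeze_zero
        (fun n => mul_nonneg (norm_nonneg _) (zpow_nonneg hg0.le n))
        (fun n => ?_) (by simpa using ha'.add hb')
      have h3 : ‖(a + b) n‖ * (max ga gb) ^ n ≤ (‖a n‖ + ‖b n‖) * (max ga gb) ^ n :=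
        mul_le_mul_of_nonneg_right (norm_add_le _ _) (zpow_nonneg hg0.le n)
      simpa [add_mul] using h3
  smul_mem' := by
    rintro c a ⟨ga, da, hga0, hga, hda, haT, haB⟩
    exact ⟨ga, da, hga0, hga, hda,
      by simpa [norm_mul, mul_assoc] using haT.const_mul ‖c‖,
      by simpa [norm_mul, mul_assoc] using haB.const_mul ‖c‖⟩

/-- The formal derivative operator `f ↦ df/dT` on two-sided (Laurent) coefficient sequences:
`(D a) n = (n + 1) * a (n + 1)`. -/
def DerZ (K : Type*) [NormedField K] : (ℤ → K) →ₗ[K] (ℤ → K) where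
  toFun a := fun n => ((n + 1 : ℤ) : K) * a (n + 1)
  map_add' a b := by funext n; simp [mul_add]
  map_smul' c a := by
    funext n
    simp only [Pi.smul_apply, smul_eq_mul, RingHom.id_apply]
    ring

private lemma norm_int_lower (K : Type*) [NormedField K] [IsUltrametricDist K] [CharZero K] :
    ∃ k : ℕ, ∀ n : ℕ, 1 ≤ n → ‖((n : ℤ) : K)‖⁻¹ ≤ (n : ℝ) ^ k := by
  suffices h : ∃ t : ℝ, 0 < t ∧ ∀ n : ℕ, 1 ≤ n → (n : ℝ) ^ (-t) ≤ ‖((n : ℤ) : K)‖ by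
    obtain ⟨t, ht, h⟩ := h
    refine ⟨⌈t⌉₊, fun n hn => ?_⟩
    have hn1 : (1 : ℝ) ≤ (n : ℝ) := by exact_mod_cast hn
    have hpos : (0 : ℝ) < (n : ℝ) ^ (-t) := Real.rpow_pos_of_pos (by linarith) _
    have h1 : ‖((n : ℤ) : K)‖⁻¹ ≤ ((n : ℝ) ^ (-t))⁻¹ := inv_anti₀ hpos (h n hn)
    have h2 : ((n : ℝ) ^ (-t))⁻¹ = (n : ℝ) ^ t := by
      rw [← Real.rpow_neg (by linarith), neg_neg]
    calc ‖((n : ℤ) : K)‖⁻¹ ≤ (n : ℝ) ^ t := by rw [← h2]; exact h1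
      _ ≤ (n : ℝ) ^ (⌈t⌉₊ : ℝ) := Real.rpow_le_rpow_of_exponent_le hn1 (Nat.le_ceil t)
      _ = (n : ℝ) ^ (⌈t⌉₊ : ℕ) := Real.rpow_natCast _ _
  -- build the MulRingNorm on ℚ
  set f : MulRingNorm ℚ :=
    { toFun := fun x => ‖((x : ℚ) : K)‖
      map_zero' := by simp
      add_le' := fun x y => by push_cast; exact norm_add_le _ _
      neg' := fun x => by push_cast; exact norm_neg _
      map_one' := by simp
      map_mul' := fun x y => by push_cast; exact norm_mul _ _
      eq_zero_of_map_eq_zero' := fun x hx => by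
        have := norm_eq_zero.mp hx
        exact_mod_cast (Rat.cast_injective (α := K)) (by simpa using this) } with hf
  have hfn : ∀ n : ℕ, f (n : ℚ) = ‖((n : ℤ) : K)‖ := fun n => by
    show ‖(((n : ℚ) : K))‖ = _; push_cast; rfl
  have bdd : ∀ n : ℕ, f n ≤ 1 := fun n => by
    rw [hfn]; exact IsUltrametricDist.norm_intCast_le_one K n
  by_cases htriv : f = 1
  · refine ⟨1, one_pos, fun n hn => ?_⟩
    have : f n = 1 := by
      rw [htriv, MulRingNorm.apply_one,
        if_neg (by exact_mod_cast (by omega : n ≠ 0) : ¬((n:ℚ) = 0))]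
    rw [← hfn n, this]
    exact Real.rpow_le_one_of_one_le_of_nonpos (by exact_mod_cast hn) (by norm_num)
  · have hg : (MulRingNorm.mulRingNormEquivAbsoluteValue f).IsNontrivial := by
      by_contra hc
      rw [AbsoluteValue.not_isNontrivial_iff] at hc
      apply htriv
      ext x
      rw [MulRingNorm.apply_one]
      split_ifs with hx
      · simp [hx]
      · exact hc x hx
    obtain ⟨p, ⟨hp0, hp1⟩, hmin⟩ :=
      Rat.AbsoluteValue.exists_minimal_nat_zero_lt_and_lt_one hg bdd
    have hprime : p.Prime :=
      Rat.AbsoluteValue.is_prime_of_minimal_nat_zero_lt_and_lt_one hp0 hp1 hmin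
    obtain ⟨t, ht, hfp⟩ := Rat.AbsoluteValue.exists_pos_eq_pow_neg hp0 hp1 hmin
    replace hfp : f p = (p : ℝ) ^ (-t) := hfp
    refine ⟨t, ht, fun n hn => ?_⟩
    rw [← hfn n]
    obtain ⟨e, m, hpm, rfl⟩ := Nat.exists_eq_pow_mul_and_not_dvd (by omega : n ≠ 0) p
      hprime.ne_one
    have hfm : f m = 1 := Rat.AbsoluteValue.eq_one_of_not_dvd bdd hp0 hp1 hmin hpm
    have hcalc : f ((p ^ e * m : ℕ) : ℚ) = ((p ^ e : ℕ) : ℝ) ^ (-t) := by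
      push_cast
      rw [map_mul, map_pow, hfm, mul_one, hfp, ← Real.rpow_natCast (_ ^ _), ← Real.rpow_mul
        (by positivity), mul_comm, Real.rpow_mul (by positivity), Real.rpow_natCast]
    rw [hcalc]
    -- (p^e*m)^(-t) ≤ (p^e)^(-t)
    have h1 : ((p ^ e : ℕ) : ℝ) ≤ ((p ^ e * m : ℕ) : ℝ) := by
      have h1m : 1 ≤ m := by rcases Nat.eq_zero_or_pos m with rfl | h; · simp at hn
                             · omega
      exact_mod_cast Nat.le_mul_of_pos_right _ h1m
    have hpe : (0 : ℝ) < ((p ^ e : ℕ) : ℝ) := by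
      have := hprime.pos; positivity
    rw [Real.rpow_neg (by positivity), Real.rpow_neg (by positivity)]
    exact inv_anti₀ (Real.rpow_pos_of_pos hpe t) (Real.rpow_le_rpow hpe.le h1 ht.le)

private lemma core_atTop (K : Type*) [NormedField K] [IsUltrametricDist K] [CharZero K]
    {r : ℝ} (hr0 : 0 < r) (hr1 : r < 1) :
    Tendsto (fun n : ℤ => ‖((n : ℤ) : K)‖⁻¹ * r ^ n) atTop (𝓝 0) := by
  obtain ⟨k, hk⟩ := norm_int_lower K
  rw [← Nat.map_cast_int_atTop, tendsto_map'_iff]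
  refine squeeze_zero' (Eventually.of_forall fun m => mul_nonneg (inv_nonneg.mpr (norm_nonneg _)) (zpow_nonneg hr0.le _)) ?_
    (tendsto_pow_const_mul_const_pow_of_lt_one k hr0.le hr1)
  filter_upwards [eventually_ge_atTop 1] with m hm
  show ‖((m : ℤ) : K)‖⁻¹ * r ^ (m : ℤ) ≤ (m : ℝ) ^ k * r ^ m
  rw [zpow_natCast]
  exact mul_le_mul_of_nonneg_right (hk m hm) (pow_nonneg hr0.le m)

private lemma core_atBot (K : Type*) [NormedField K] [IsUltrametricDist K] [CharZero K]
    {r : ℝ} (hr1 : 1 < r) :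
    Tendsto (fun n : ℤ => ‖((n : ℤ) : K)‖⁻¹ * r ^ n) atBot (𝓝 0) := by
  have h0 : (0:ℝ) < r⁻¹ := inv_pos.mpr (lt_trans one_pos hr1)
  have h := (core_atTop K h0 (inv_lt_one_of_one_lt₀ hr1)).comp tendsto_neg_atBot_atTop
  refine h.congr fun n => ?_
  show ‖((-n : ℤ) : K)‖⁻¹ * r⁻¹ ^ (-n) = _
  rw [Int.cast_neg, norm_neg, inv_zpow, zpow_neg, inv_inv]


private lemma shift_up : Tendsto (fun n : ℤ => n + 1) atTop atTop :=
  tendsto_atTop_add_const_right atTop 1 tendsto_id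

private lemma shift_up_bot : Tendsto (fun n : ℤ => n + 1) atBot atBot :=
  tendsto_atBot_add_const_right atBot 1 tendsto_id

private lemma shift_down : Tendsto (fun n : ℤ => n - 1) atTop atTop :=
  tendsto_atTop_add_const_right atTop (-1) tendsto_id

private lemma shift_down_bot : Tendsto (fun n : ℤ => n - 1) atBot atBot :=
  tendsto_atBot_add_const_right atBot (-1) tendsto_id

private lemma derZ_mem (K : Type*) [NormedField K] [IsUltrametricDist K] [CharZero K]
    {γ δ : ℝ} (hγ : 0 < γ) (hγδ : γ ≤ δ) {a : ℤ → K}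
    (ha : a ∈ DaggerAnnulus K γ δ hγ hγδ) : DerZ K a ∈ DaggerAnnulus K γ δ hγ hγδ := by
  obtain ⟨γ', δ', hγ'0, hγ'γ, hδδ', haT, haB⟩ := ha
  have hδ'0 : 0 < δ' := lt_trans (lt_of_lt_of_le hγ hγδ) hδδ'
  refine ⟨γ', δ', hγ'0, hγ'γ, hδδ', ?_, ?_⟩
  · refine squeeze_zero
      (fun n => mul_nonneg (norm_nonneg _) (zpow_nonneg hδ'0.le n)) (fun n => ?_)
      (by simpa using (haT.comp shift_up).const_mul δ'⁻¹)
    show ‖((n + 1 : ℤ) : K) * a (n + 1)‖ * δ' ^ n ≤ δ'⁻¹ * (‖a (n + 1)‖ * δ' ^ (n + 1))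
    rw [norm_mul, zpow_add_one₀ hδ'0.ne']
    calc ‖((n + 1 : ℤ) : K)‖ * ‖a (n + 1)‖ * δ' ^ n
        ≤ 1 * ‖a (n + 1)‖ * δ' ^ n := by
          gcongr
          exact IsUltrametricDist.norm_intCast_le_one K _
      _ = δ'⁻¹ * (‖a (n + 1)‖ * (δ' ^ n * δ')) := by
          field_simp
  · refine squeeze_zero
      (fun n => mul_nonneg (norm_nonneg _) (zpow_nonneg hγ'0.le n)) (fun n => ?_)
      (by simpa using (haB.comp shift_up_bot).const_mul γ'⁻¹)
    show ‖((n + 1 : ℤ) : K) * a (n + 1)‖ * γ' ^ n ≤ γ'⁻¹ * (‖a (n + 1)‖ * γ' ^ (n + 1))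
    rw [norm_mul, zpow_add_one₀ hγ'0.ne']
    calc ‖((n + 1 : ℤ) : K)‖ * ‖a (n + 1)‖ * γ' ^ n
        ≤ 1 * ‖a (n + 1)‖ * γ' ^ n := by
          gcongr
          exact IsUltrametricDist.norm_intCast_le_one K _
      _ = γ'⁻¹ * (‖a (n + 1)‖ * (γ' ^ n * γ')) := by
          field_simp

private lemma antideriv_spec (K : Type*) [NormedField K] [IsUltrametricDist K] [CharZero K]
    {γ δ : ℝ} (hγ : 0 < γ) (hγδ : γ ≤ δ) {a : ℤ → K}
    (ha : a ∈ DaggerAnnulus K γ δ hγ hγδ) (ha1 : a (-1) = 0) :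
    ∃ b ∈ DaggerAnnulus K γ δ hγ hγδ, DerZ K b = a := by
  obtain ⟨γ', δ', hγ'0, hγ'γ, hδδ', haT, haB⟩ := ha
  have hδ'0 : 0 < δ' := lt_trans (lt_of_lt_of_le hγ hγδ) hδδ'
  set b : ℤ → K := fun n => ((n : ℤ) : K)⁻¹ * a (n - 1) with hb
  have hkey : ∀ (ρ'' ρ' : ℝ), ρ' ≠ 0 → ∀ n : ℤ,
      ‖b n‖ * ρ'' ^ n =
        (‖((n : ℤ) : K)‖⁻¹ * (ρ'' / ρ') ^ n) * ((‖a (n - 1)‖ * ρ' ^ (n - 1)) * ρ') := by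
    intro ρ'' ρ' hρ' n
    rw [hb]
    show ‖((n : ℤ) : K)⁻¹ * a (n - 1)‖ * ρ'' ^ n = _
    have h1 : (ρ'' / ρ') ^ n * (ρ' ^ (n - 1) * ρ') = ρ'' ^ n := by
      rw [div_zpow, zpow_sub_one₀ hρ']
      field_simp
    rw [norm_mul, norm_inv, ← h1]
    ring
  refine ⟨b, ?_, ?_⟩
  · set δ'' : ℝ := (δ + δ') / 2 with hδ''
    set γ'' : ℝ := (γ' + γ) / 2 with hγ''
    have hδ''1 : δ < δ'' := by rw [hδ'']; linarith
    have hδ''2 : δ'' < δ' := by rw [hδ'']; linarith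
    have hδ''0 : 0 < δ'' := lt_trans (lt_of_lt_of_le hγ hγδ) hδ''1
    have hγ''1 : γ' < γ'' := by rw [hγ'']; linarith
    have hγ''2 : γ'' < γ := by rw [hγ'']; linarith
    have hγ''0 : 0 < γ'' := lt_trans hγ'0 hγ''1
    refine ⟨γ'', δ'', hγ''0, hγ''2, hδ''1, ?_, ?_⟩
    · have hT := ((core_atTop K (div_pos hδ''0 hδ'0)
        ((div_lt_one hδ'0).mpr hδ''2)).mul
          (((haT.comp shift_down).mul_const δ')))
      have hT' : Tendsto (fun n : ℤ =>
          (‖((n : ℤ) : K)‖⁻¹ * (δ'' / δ') ^ n) * ((‖a (n - 1)‖ * δ' ^ (n - 1)) * δ'))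
          atTop (𝓝 0) := by simpa using hT
      exact hT'.congr fun n => (hkey δ'' δ' hδ'0.ne' n).symm
    · have hB := ((core_atBot K ((one_lt_div hγ'0).mpr hγ''1)).mul
          (((haB.comp shift_down_bot).mul_const γ')))
      have hB' : Tendsto (fun n : ℤ =>
          (‖((n : ℤ) : K)‖⁻¹ * (γ'' / γ') ^ n) * ((‖a (n - 1)‖ * γ' ^ (n - 1)) * γ'))
          atBot (𝓝 0) := by simpa using hB
      exact hB'.congr fun n => (hkey γ'' γ' hγ'0.ne' n).symm
  · funext n
    show ((n + 1 : ℤ) : K) * (((n + 1 : ℤ) : K)⁻¹ * a (n + 1 - 1)) = a n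
    rcases eq_or_ne n (-1) with rfl | hn
    · norm_num [ha1]
    · rw [mul_inv_cancel_left₀ (by exact_mod_cast (by omega : (n + 1 : ℤ) ≠ 0)), add_sub_cancel_right]

/-- **`H¹_dR` of the closed dagger annulus is one-dimensional, spanned by `dT/T`** (the
`n = r = 1` case of Lemma 2.1(a) of the paper): the formal derivative `D` maps the ring `W†` of
overconvergent functions on the annulus `γ ≤ |T| ≤ δ` into itself, an element `a ∈ W†` is in the
range of `D : W† → W†` if and only if its residue coefficient `a (-1)` vanishes, and the quotient
`W† ⧸ range D` is a one-dimensional `K`-vector space spanned by the class of the indicator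
sequence of `-1` (the class of the differential `dT/T`). -/
theorem daggerAnnulus_deRham
    (K : Type*) [NormedField K] [IsUltrametricDist K] [CharZero K]
    (γ δ : ℝ) (hγ : 0 < γ) (hγδ : γ ≤ δ) :
    (∀ a ∈ DaggerAnnulus K γ δ hγ hγδ, DerZ K a ∈ DaggerAnnulus K γ δ hγ hγδ) ∧
    (∀ a ∈ DaggerAnnulus K γ δ hγ hγδ,
      ((∃ b ∈ DaggerAnnulus K γ δ hγ hγδ, DerZ K b = a) ↔ a (-1) = 0)) ∧
    ∃ he : (fun n : ℤ => if n = -1 then (1 : K) else 0) ∈ DaggerAnnulus K γ δ hγ hγδ,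
      Submodule.span K
          {(Submodule.Quotient.mk ⟨fun n : ℤ => if n = -1 then (1 : K) else 0, he⟩ :
            DaggerAnnulus K γ δ hγ hγδ ⧸
              Submodule.comap (DaggerAnnulus K γ δ hγ hγδ).subtype
                (Submodule.map (DerZ K) (DaggerAnnulus K γ δ hγ hγδ)))} = ⊤ ∧
      Module.finrank K
          (DaggerAnnulus K γ δ hγ hγδ ⧸
            Submodule.comap (DaggerAnnulus K γ δ hγ hγδ).subtype
              (Submodule.map (DerZ K) (DaggerAnnulus K γ δ hγ hγδ))) = 1 := by
  classical
  set W := DaggerAnnulus K γ δ hγ hγδ with hW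
  have hresid : ∀ b : ℤ → K, DerZ K b (-1) = 0 := by
    intro b
    show (((-1 : ℤ) + 1 : ℤ) : K) * b (-1 + 1) = 0
    norm_num
  have part2 : ∀ a ∈ W, ((∃ b ∈ W, DerZ K b = a) ↔ a (-1) = 0) := by
    intro a haW
    constructor
    · rintro ⟨b, hbW, rfl⟩
      exact hresid b
    · intro ha1
      exact antideriv_spec K hγ hγδ haW ha1
  have he : (fun n : ℤ => if n = -1 then (1 : K) else 0) ∈ W := by
    refine ⟨γ / 2, δ + 1, half_pos hγ, half_lt_self hγ, by linarith, ?_, ?_⟩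
    · refine tendsto_const_nhds.congr' ?_
      filter_upwards [eventually_ge_atTop (0 : ℤ)] with n hn
      rw [if_neg (by omega), norm_zero, zero_mul]
    · refine tendsto_const_nhds.congr' ?_
      filter_upwards [eventually_le_atBot (-2 : ℤ)] with n hn
      rw [if_neg (by omega), norm_zero, zero_mul]
  set N := Submodule.comap W.subtype (Submodule.map (DerZ K) W) with hN
  have hNmem : ∀ x : W, x ∈ N ↔ ∃ b ∈ W, DerZ K b = (x : ℤ → K) := by
    intro x
    rw [hN, Submodule.mem_comap, Submodule.mem_map]
    simp [Submodule.subtype_apply]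
  set e : W := ⟨fun n : ℤ => if n = -1 then (1 : K) else 0, he⟩ with hedef
  have hspan : ∀ x : W ⧸ N, ∃ c : K, c • (Submodule.Quotient.mk e : W ⧸ N) = x := by
    intro x
    obtain ⟨a, rfl⟩ := Submodule.Quotient.mk_surjective N x
    refine ⟨(a : ℤ → K) (-1), ?_⟩
    rw [← Submodule.Quotient.mk_smul, Submodule.Quotient.eq]
    rw [hNmem]
    refine (part2 _ (Submodule.sub_mem W (Submodule.smul_mem W _ e.2) a.2)).mpr ?_
    show ((a : ℤ → K) (-1)) • (if (-1 : ℤ) = -1 then (1 : K) else 0) - (a : ℤ → K) (-1) = 0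
    simp
  have hne : (Submodule.Quotient.mk e : W ⧸ N) ≠ 0 := by
    rw [Ne, Submodule.Quotient.mk_eq_zero, hNmem]
    rintro ⟨b, hbW, hbe⟩
    have : (e : ℤ → K) (-1) = 0 := by rw [← hbe]; exact hresid b
    simp [hedef] at this
  refine ⟨fun a ha => derZ_mem K hγ hγδ ha, part2, he, ?_, ?_⟩
  · rw [Submodule.eq_top_iff']
    intro x
    obtain ⟨c, hc⟩ := hspan x
    exact hc ▸ Submodule.smul_mem _ _ (Submodule.mem_span_singleton_self _)
  · haveI : NoZeroSMulDivisors K (W ⧸ N) := ⟨fun {c x} h => by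
      rcases eq_or_ne c 0 with rfl | hc
      · exact Or.inl rfl
      · refine Or.inr ?_
        rw [← one_smul K x, ← inv_mul_cancel₀ hc, mul_smul, h, smul_zero]⟩
    exact finrank_eq_one (Submodule.Quotient.mk e : W ⧸ N) hne hspan
end

section
/- With O as in the context (overconvergent functions on a closed polyannulus with product condition), fix l < n. If a ∈ O, then the function b : Λ → K defined by b v = a v / ((v l : ℤ) : K) when v l ≠ 0 and b v = 0 when v l = 0, again lies in O. (Formal integration in the l-th variable preserves the overconvergent coefficient module; this is claim (i) in the proof of the paper's Lemma 2.1, stated there for series with coefficients in a dagger algebra.) -/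
open Filter Topology

/-- Laurent exponents for `n` variables, negative only in the first `r` variables. -/
abbrev LaurentExp (n r : ℕ) : Type :=
  {v : Fin n → ℤ // ∀ i : Fin n, r ≤ (i : ℕ) → 0 ≤ v i}

/-- The compact region `R(γ', δ', μ')` of radii: `0 < t i ≤ δ' i` for all `i`, `γ' i ≤ t i` for
`i < r`, and `μ' ≤ ∏_{i<r} t i`. -/
def polyRegion (n r : ℕ) (γ' δ' : Fin n → ℝ) (μ' : ℝ) : Set (Fin n → ℝ) :=
  {t | (∀ i, 0 < t i ∧ t i ≤ δ' i) ∧ (∀ i : Fin n, (i : ℕ) < r → γ' i ≤ t i) ∧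
    μ' ≤ ∏ i ∈ Finset.univ.filter (fun i : Fin n => (i : ℕ) < r), t i}

/-- The weight `S_{γ',δ',μ'}(v) = ⨆_{t ∈ R(γ',δ',μ')} ∏ i (t i)^(v i)`. -/
noncomputable def polyWeight (n r : ℕ) (γ' δ' : Fin n → ℝ) (μ' : ℝ) (v : Fin n → ℤ) : ℝ :=
  ⨆ t ∈ polyRegion n r γ' δ' μ', ∏ i, t i ^ v i

/-- The coefficient model `O` of the ring of overconvergent (dagger) functions on the closed
polyannulus `V = {x | ∏_{i<r} |x i| ≥ μ, |x i| ≤ δ i for all i, |x i| ≥ γ i for i < r}`: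
functions `a : Λ → K` having overconvergent decay `‖a v‖ · S_{γ',δ',μ'}(v) → 0` along the
cofinite filter, for some admissible larger parameter system `(γ', δ', μ')`. -/
def OverconvergentO (K : Type*) [NormedField K] (n r : ℕ) (γ δ : Fin n → ℝ) (μ : ℝ) :
    Set (LaurentExp n r → K) :=
  {a | ∃ γ' δ' : Fin n → ℝ, ∃ μ' : ℝ,
    (∀ i : Fin n, (i : ℕ) < r → 0 < γ' i ∧ γ' i < γ i ∧ γ' i ≤ δ' i) ∧
    (∀ i, δ i < δ' i) ∧ 0 < μ' ∧ μ' < μ ∧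
    Tendsto (fun v : LaurentExp n r => ‖a v‖ * polyWeight n r γ' δ' μ' v.1)
      cofinite (𝓝 0)}

lemma norm_nat_lower (K : Type*) [NormedField K] [IsUltrametricDist K] [CharZero K] :
    (∀ m : ℕ, m ≠ 0 → ‖(m : K)‖ = 1) ∨
    ∃ N : ℕ, 2 ≤ N ∧ 0 < ‖(N : K)‖ ∧ ‖(N : K)‖ < 1 ∧
      (∀ s : ℕ, s ≠ 0 → s < N → ‖(s : K)‖ = 1) := by
  by_cases h : ∃ m : ℕ, 2 ≤ m ∧ ‖(m : K)‖ < 1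
  · right
    refine ⟨Nat.find h, (Nat.find_spec h).1, ?_, (Nat.find_spec h).2, ?_⟩
    · have h0 : ((Nat.find h : ℕ) : K) ≠ 0 :=
        Nat.cast_ne_zero.mpr (by have := (Nat.find_spec h).1; omega)
      exact norm_pos_iff.mpr h0
    · intro s hs0 hsN
      rcases eq_or_lt_of_le (IsUltrametricDist.norm_natCast_le_one K s) with he | hlt
      · exact he
      · rcases Nat.lt_or_ge s 2 with h2 | h2
        · interval_cases s <;> simp_all
        · exact absurd ⟨h2, hlt⟩ (Nat.find_min h hsN)
  · left
    intro m hm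
    rcases eq_or_lt_of_le (IsUltrametricDist.norm_natCast_le_one K m) with he | hlt
    · exact he
    · rcases Nat.lt_or_ge m 2 with h2 | h2
      · interval_cases m <;> simp_all
      · exact absurd ⟨m, h2, hlt⟩ h

lemma norm_nat_ge (K : Type*) [NormedField K] [IsUltrametricDist K] [CharZero K]
    {N : ℕ} (hN2 : 2 ≤ N) (hc1 : ‖(N : K)‖ < 1)
    (hmin : ∀ s : ℕ, s ≠ 0 → s < N → ‖(s : K)‖ = 1) :
    ∀ m : ℕ, m ≠ 0 → ‖(N : K)‖ ^ (Nat.log N m + 1) ≤ ‖(m : K)‖ := by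
  set c := ‖(N : K)‖ with hc
  have hc0 : 0 < c := norm_pos_iff.mpr (Nat.cast_ne_zero.mpr (by omega))
  intro m
  induction m using Nat.strong_induction_on with
  | _ m IH =>
    intro hm0
    rcases Nat.lt_or_ge m N with hmN | hmN
    · have h1 : ‖(m : K)‖ = 1 := hmin m hm0 hmN
      rw [h1]
      exact pow_le_one₀ hc0.le hc1.le
    · have hdm : N * (m / N) + m % N = m := Nat.div_add_mod m N
      have hq0 : m / N ≠ 0 := by
        have := Nat.div_pos hmN (by omega : 0 < N); omega
      by_cases hs : m % N = 0
      · have hmq : m = (m / N) * N := (Nat.div_mul_cancel (Nat.dvd_of_mod_eq_zero hs)).symm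
        have hqm : m / N < m := Nat.div_lt_self (Nat.pos_of_ne_zero hm0) hN2
        have hlog : Nat.log N m = Nat.log N (m / N) + 1 := by
          conv_lhs => rw [hmq]
          exact Nat.log_mul_base (lt_of_lt_of_le one_lt_two hN2) hq0
        have hnorm : ‖(m : K)‖ = ‖((m / N : ℕ) : K)‖ * c := by
          nth_rewrite 1 [hmq]; push_cast; rw [norm_mul]
        rw [hlog, hnorm]
        calc c ^ (Nat.log N (m / N) + 1 + 1) = c ^ (Nat.log N (m / N) + 1) * c := by ring
        _ ≤ ‖((m / N : ℕ) : K)‖ * c :=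
            mul_le_mul_of_nonneg_right (IH _ hqm hq0) hc0.le
      · have hs1 : ‖((m % N : ℕ) : K)‖ = 1 := hmin _ hs (Nat.mod_lt m (by omega))
        have hsub : ((m % N : ℕ) : K) = (m : K) - (N : K) * ((m / N : ℕ) : K) := by
          nth_rewrite 2 [← hdm]; push_cast; ring
        have hNq : ‖(N : K) * ((m / N : ℕ) : K)‖ < 1 := by
          rw [norm_mul]
          calc c * ‖((m / N : ℕ) : K)‖ ≤ c * 1 :=
              mul_le_mul_of_nonneg_left (IsUltrametricDist.norm_natCast_le_one K _) hc0.le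
          _ < 1 := by rw [mul_one]; exact hc1
        have h1m : 1 ≤ ‖(m : K)‖ := by
          by_contra hlt
          push_neg at hlt
          have := hsub ▸ hs1
          have hle : ‖(m : K) - (N : K) * ((m / N : ℕ) : K)‖ ≤
              max ‖(m : K)‖ ‖(N : K) * ((m / N : ℕ) : K)‖ := by
            rw [sub_eq_add_neg]
            simpa using IsUltrametricDist.norm_add_le_max (m : K) (-((N : K) * ((m / N : ℕ) : K)))
          rw [this] at hle
          rcases max_cases ‖(m : K)‖ ‖(N : K) * ((m / N : ℕ) : K)‖ with ⟨h, _⟩ | ⟨h, _⟩ <;>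
            rw [h] at hle <;> linarith
        exact le_trans (pow_le_one₀ hc0.le hc1.le) h1m

lemma int_inv_pow_bound (K : Type*) [NormedField K] [IsUltrametricDist K] [CharZero K]
    {ρ : ℝ} (hρ0 : 0 ≤ ρ) (hρ1 : ρ < 1) :
    ∃ C : ℝ, 0 ≤ C ∧ ∀ m : ℤ, m ≠ 0 → ‖(m : K)‖⁻¹ * ρ ^ m.natAbs ≤ C := by
  suffices h : ∃ C : ℝ, 0 ≤ C ∧ ∀ m : ℕ, m ≠ 0 → ‖(m : K)‖⁻¹ * ρ ^ m ≤ C by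
    obtain ⟨C, hC0, hC⟩ := h
    refine ⟨C, hC0, fun m hm => ?_⟩
    have hcast : ‖(m : K)‖ = ‖((m.natAbs : ℕ) : K)‖ := by
      rcases Int.natAbs_eq m with h' | h'
      · conv_lhs => rw [h']
        rw [Int.cast_natCast]
      · conv_lhs => rw [h']
        rw [Int.cast_neg, Int.cast_natCast, norm_neg]
    rw [hcast]
    exact hC _ (Int.natAbs_ne_zero.mpr hm)
  rcases norm_nat_lower K with hall | ⟨N, hN2, hc0, hc1, hmin⟩
  · refine ⟨1, zero_le_one, fun m hm => ?_⟩
    rw [hall m hm, inv_one, one_mul]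
    exact pow_le_one₀ hρ0 hρ1.le
  · set c := ‖(N : K)‖ with hc
    set d := c⁻¹ with hd
    have hd1 : 1 < d := one_lt_inv_iff₀.mpr ⟨hc0, hc1⟩
    have hN1 : (1 : ℝ) < (N : ℝ) := by exact_mod_cast lt_of_lt_of_le one_lt_two hN2
    set s := Real.logb N d with hsdef
    have hs0 : 0 ≤ s := Real.logb_nonneg hN1 hd1.le
    set k := ⌈s⌉₊ with hk
    have key : ∀ m : ℕ, m ≠ 0 → ‖(m : K)‖⁻¹ ≤ d * (m : ℝ) ^ k := by
      intro m hm
      have hmpos : 0 < ‖(m : K)‖ := norm_pos_iff.mpr (Nat.cast_ne_zero.mpr hm)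
      have h1 := norm_nat_ge K hN2 hc1 hmin m hm
      have hinv : ‖(m : K)‖⁻¹ ≤ d ^ (Nat.log N m + 1) := by
        rw [hd, inv_pow]
        exact inv_anti₀ (pow_pos hc0 _) h1
      refine hinv.trans ?_
      rw [pow_succ, mul_comm]
      refine mul_le_mul_of_nonneg_left ?_ (by positivity)
      -- d ^ (Nat.log N m) ≤ (m:ℝ)^k
      set j := Nat.log N m with hj
      have hNj : ((N : ℝ)) ^ j ≤ (m : ℝ) := by exact_mod_cast Nat.pow_log_le_self N hm
      have hdN : d = (N : ℝ) ^ s := (Real.rpow_logb (by linarith) (by linarith) (by positivity)).symm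
      have e1 : d ^ j = ((N : ℝ) ^ j) ^ s := by
        rw [hdN, ← Real.rpow_natCast ((N:ℝ) ^ s) j, ← Real.rpow_natCast (N:ℝ) j,
          ← Real.rpow_mul (by linarith), ← Real.rpow_mul (by linarith), mul_comm]
      rw [e1]
      have hm1 : (1 : ℝ) ≤ (m : ℝ) := by
        exact_mod_cast Nat.one_le_iff_ne_zero.mpr hm
      calc ((N : ℝ) ^ j) ^ s ≤ (m : ℝ) ^ s :=
            Real.rpow_le_rpow (by positivity) hNj hs0
        _ ≤ (m : ℝ) ^ (k : ℝ) := Real.rpow_le_rpow_of_exponent_le hm1 (Nat.le_ceil s)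
        _ = (m : ℝ) ^ k := Real.rpow_natCast _ _
    have htend : Tendsto (fun m : ℕ => d * ((m : ℝ) ^ k * ρ ^ m)) atTop (𝓝 (d * 0)) :=
      (tendsto_pow_const_mul_const_pow_of_lt_one k hρ0 hρ1).const_mul d
    obtain ⟨C, hC⟩ := htend.bddAbove_range
    refine ⟨max C 0, le_max_right _ _, fun m hm => ?_⟩
    have : ‖(m : K)‖⁻¹ * ρ ^ m ≤ d * ((m : ℝ) ^ k * ρ ^ m) := by
      rw [← mul_assoc]
      exact mul_le_mul_of_nonneg_right (key m hm) (pow_nonneg hρ0 m)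
    exact this.trans ((hC (Set.mem_range_self m)).trans (le_max_left _ _))

section helpers

variable {n r : ℕ} {γ' δ' : Fin n → ℝ} {μ' : ℝ} {v : Fin n → ℤ}

lemma prod_le_bound (hγp : ∀ i : Fin n, (i : ℕ) < r → 0 < γ' i)
    (hv : ∀ i : Fin n, r ≤ (i : ℕ) → 0 ≤ v i)
    {t : Fin n → ℝ} (ht : t ∈ polyRegion n r γ' δ' μ') :
    ∏ i, t i ^ v i ≤ ∏ i, max (γ' i ^ v i) (δ' i ^ v i) := by
  refine Finset.prod_le_prod (fun i _ => zpow_nonneg (ht.1 i).1.le _) (fun i _ => ?_)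
  rcases le_or_gt 0 (v i) with hvi | hvi
  · refine le_max_of_le_right ?_
    obtain ⟨m, hm⟩ := Int.eq_ofNat_of_zero_le hvi
    rw [hm, zpow_natCast, zpow_natCast]
    exact pow_le_pow_left₀ (ht.1 i).1.le (ht.1 i).2 m
  · have hir : (i : ℕ) < r := by
      by_contra h
      exact absurd (hv i (le_of_not_gt h)) (not_le.mpr hvi)
    refine le_max_of_le_left ?_
    obtain ⟨m, hm⟩ : ∃ m : ℕ, v i = -(m : ℤ) := ⟨(v i).natAbs, by omega⟩
    rw [hm, zpow_neg, zpow_neg, zpow_natCast, zpow_natCast]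
    exact inv_anti₀ (pow_pos (hγp i hir) m)
      (pow_le_pow_left₀ (hγp i hir).le (ht.2.1 i hir) m)

lemma bound_nonneg (hδ' : ∀ i, 0 < δ' i) :
    0 ≤ ∏ i, max (γ' i ^ v i) (δ' i ^ v i) :=
  Finset.prod_nonneg fun i _ =>
    le_trans (zpow_pos (hδ' i) _).le (le_max_right _ _)

lemma polyWeight_le {M : ℝ} (hM : 0 ≤ M)
    (h : ∀ t ∈ polyRegion n r γ' δ' μ', ∏ i, t i ^ v i ≤ M) :
    polyWeight n r γ' δ' μ' v ≤ M :=
  Real.iSup_le (fun t => Real.iSup_le (fun ht => h t ht) hM) hM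

lemma polyWeight_nonneg : 0 ≤ polyWeight n r γ' δ' μ' v :=
  Real.iSup_nonneg fun t => Real.iSup_nonneg fun ht =>
    Finset.prod_nonneg fun i _ => zpow_nonneg (ht.1 i).1.le _

lemma le_polyWeight (hδ' : ∀ i, 0 < δ' i)
    (hγp : ∀ i : Fin n, (i : ℕ) < r → 0 < γ' i)
    (hv : ∀ i : Fin n, r ≤ (i : ℕ) → 0 ≤ v i)
    {t₀ : Fin n → ℝ} (ht₀ : t₀ ∈ polyRegion n r γ' δ' μ') :
    ∏ i, t₀ i ^ v i ≤ polyWeight n r γ' δ' μ' v := by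
  have hbdd : BddAbove (Set.range fun t =>
      ⨆ (_ : t ∈ polyRegion n r γ' δ' μ'), ∏ i, t i ^ v i) := by
    refine ⟨∏ i, max (γ' i ^ v i) (δ' i ^ v i), ?_⟩
    rintro x ⟨t, rfl⟩
    exact Real.iSup_le (fun ht => prod_le_bound hγp hv ht) (bound_nonneg hδ')
  calc ∏ i, t₀ i ^ v i
      = ⨆ (_ : t₀ ∈ polyRegion n r γ' δ' μ'), ∏ i, t₀ i ^ v i := (ciSup_pos (f := fun _ : t₀ ∈ polyRegion n r γ' δ' μ' => ∏ i, t₀ i ^ v i) ht₀).symm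
    _ ≤ polyWeight n r γ' δ' μ' v := le_ciSup hbdd t₀

end helpers

/-- **Formal integration in the `l`-th variable preserves the overconvergent coefficient module**
(claim (i) in the proof of Lemma 2.1 of the paper): if `a ∈ O`, then the function `b` with
`b v = a v / v l` when `v l ≠ 0` and `b v = 0` when `v l = 0` again lies in `O`. -/
theorem formal_integration_mem_overconvergentO
    (K : Type*) [NormedField K] [IsUltrametricDist K] [CharZero K]
    (n r : ℕ) (hrn : r ≤ n) (γ δ : Fin n → ℝ) (μ : ℝ)
    (hγδ : ∀ i : Fin n, (i : ℕ) < r → 0 < γ i ∧ γ i ≤ δ i)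
    (hδ : ∀ i, 0 < δ i) (hμ : 0 < μ)
    (hμδ : μ ≤ ∏ i ∈ Finset.univ.filter (fun i : Fin n => (i : ℕ) < r), δ i)
    (l : Fin n) (a : LaurentExp n r → K) (ha : a ∈ OverconvergentO K n r γ δ μ) :
    (fun v : LaurentExp n r => if v.1 l = 0 then 0 else a v / ((v.1 l : ℤ) : K)) ∈
      OverconvergentO K n r γ δ μ := by
  obtain ⟨γ', δ', μ', h1, h2, h3, h4, h5⟩ := ha
  have hδ'pos : ∀ i, 0 < δ' i := fun i => lt_trans (hδ i) (h2 i)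
  have hγ'pos : ∀ i : Fin n, (i : ℕ) < r → 0 < γ' i := fun i hi => (h1 i hi).1
  -- new parameters
  set δ'' : Fin n → ℝ := fun i => (δ i + δ' i) / 2 with hδ''def
  have hδδ'' : ∀ i, δ i < δ'' i := fun i => by have := h2 i; simp only [hδ''def]; linarith
  have hδ''δ' : ∀ i, δ'' i < δ' i := fun i => by have := h2 i; simp only [hδ''def]; linarith
  have hδ''pos : ∀ i, 0 < δ'' i := fun i => lt_trans (hδ i) (hδδ'' i)
  set g : ℝ := if (l : ℕ) < r then
      min (min ((γ' l + γ l) / 2) (δ'' l)) (γ' l * ((μ' + μ) / (2 * μ'))) else δ'' l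
    with hgdef
  have hgfacts : (l : ℕ) < r →
      γ' l < g ∧ g < γ l ∧ g ≤ δ'' l ∧ μ' * g / γ' l < μ ∧ 0 < g := by
    intro hlr
    obtain ⟨hγ'0, hγ'γ, _⟩ := h1 l hlr
    obtain ⟨hγ0, hγδl⟩ := hγδ l hlr
    have hδl := hδ l
    have hq1 : 1 < (μ' + μ) / (2 * μ') := by
      rw [lt_div_iff₀ (by linarith)]; linarith
    have hkey : γ' l < γ' l * ((μ' + μ) / (2 * μ')) := by nlinarith
    have hγ'δ'' : γ' l < δ'' l := lt_of_lt_of_le hγ'γ (le_trans hγδl (hδδ'' l).le)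
    rw [hgdef, if_pos hlr]
    refine ⟨lt_min (lt_min (by linarith) hγ'δ'') hkey, ?_, ?_, ?_, ?_⟩
    · exact lt_of_le_of_lt (le_trans (min_le_left _ _) (min_le_left _ _)) (by linarith)
    · exact le_trans (min_le_left _ _) (min_le_right _ _)
    · have hg_le : min (min ((γ' l + γ l) / 2) (δ'' l)) (γ' l * ((μ' + μ) / (2 * μ'))) ≤
          γ' l * ((μ' + μ) / (2 * μ')) := min_le_right _ _
      have : μ' * (γ' l * ((μ' + μ) / (2 * μ'))) / γ' l = (μ' + μ) / 2 := by
        field_simp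
      calc μ' * min (min ((γ' l + γ l) / 2) (δ'' l)) (γ' l * ((μ' + μ) / (2 * μ'))) / γ' l
          ≤ μ' * (γ' l * ((μ' + μ) / (2 * μ'))) / γ' l := by
            gcongr
        _ = (μ' + μ) / 2 := this
        _ < μ := by linarith
    · exact lt_min (lt_min (by linarith) (by linarith)) (mul_pos hγ'0 (div_pos (by linarith) (by linarith)))
  set γ'' : Fin n → ℝ := fun i => if i = l ∧ (l : ℕ) < r then g else γ' i with hγ''def
  set μ'' : ℝ := if (l : ℕ) < r then μ' * g / γ' l else (μ' + μ) / 2 with hμ''def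
  set ρ : ℝ := max (δ'' l / δ' l) (if (l : ℕ) < r then γ' l / g else 0) with hρdef
  have hρ0 : 0 ≤ ρ := le_trans (div_pos (hδ''pos l) (hδ'pos l)).le (le_max_left _ _)
  have hρ1 : ρ < 1 := by
    rw [hρdef]
    refine max_lt ((div_lt_one (hδ'pos l)).mpr (hδ''δ' l)) ?_
    split_ifs with hlr
    · obtain ⟨hg1, _, _, _, hg0⟩ := hgfacts hlr
      exact (div_lt_one hg0).mpr hg1
    · exact one_pos
  have hμ''pos : 0 < μ'' := by
    rw [hμ''def]; split_ifs with hlr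
    · obtain ⟨_, _, _, _, hg0⟩ := hgfacts hlr
      exact div_pos (mul_pos h3 hg0) (hγ'pos l hlr)
    · linarith
  have hμ'μ'' : μ' ≤ μ'' := by
    rw [hμ''def]; split_ifs with hlr
    · obtain ⟨hg1, _, _, _, _⟩ := hgfacts hlr
      rw [le_div_iff₀ (hγ'pos l hlr)]
      nlinarith [hγ'pos l hlr]
    · linarith
  have hμ''μ : μ'' < μ := by
    rw [hμ''def]; split_ifs with hlr
    · exact (hgfacts hlr).2.2.2.1
    · linarith
  have hγ''eq : ∀ i, i ≠ l → γ'' i = γ' i := by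
    intro i hi; rw [hγ''def]; simp [hi]
  have hγ''l : (l : ℕ) < r → γ'' l = g := by
    intro hlr; rw [hγ''def]; simp [hlr]
  -- admissibility of (γ'', δ'', μ'')
  have hadm1 : ∀ i : Fin n, (i : ℕ) < r → 0 < γ'' i ∧ γ'' i < γ i ∧ γ'' i ≤ δ'' i := by
    intro i hi
    by_cases hil : i = l
    · subst hil
      obtain ⟨hg1, hg2, hg3, _, hg0⟩ := hgfacts hi
      rw [hγ''l hi]
      exact ⟨hg0, hg2, hg3⟩
    · rw [hγ''eq i hil]
      obtain ⟨ha1, ha2, _⟩ := h1 i hi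
      obtain ⟨hb1, hb2⟩ := hγδ i hi
      exact ⟨ha1, ha2, le_trans (le_trans ha2.le hb2) (hδδ'' i).le⟩
  -- scaling: the new weight is exponentially smaller
  have hscale : ∀ v : LaurentExp n r, ∀ t ∈ polyRegion n r γ'' δ'' μ'',
      ∏ i, t i ^ v.1 i ≤ ρ ^ (v.1 l).natAbs * polyWeight n r γ' δ' μ' v.1 := by
    intro v t ht
    obtain ⟨htb, htγ, htμ⟩ := ht
    set e : ℝ := if 0 ≤ v.1 l then δ' l / δ'' l else γ' l / g with hedef
    have hlr' : ¬ 0 ≤ v.1 l → (l : ℕ) < r := fun hneg => by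
      by_contra hge
      exact hneg (v.2 l (le_of_not_gt hge))
    have he0 : 0 < e := by
      rw [hedef]; split_ifs with hv
      · exact div_pos (hδ'pos l) (hδ''pos l)
      · exact div_pos (hγ'pos l (hlr' hv)) (hgfacts (hlr' hv)).2.2.2.2
    set t' : Fin n → ℝ := Function.update t l (t l * e) with ht'def
    have ht'ne : ∀ i : Fin n, i ≠ l → t' i = t i := fun i hi => Function.update_of_ne hi _ t
    have ht'l : t' l = t l * e := Function.update_self l _ t
    have hprodid : ∀ w : Fin n → ℤ, ∏ i, t' i ^ w i = e ^ (w l) * ∏ i, t i ^ w i := by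
      intro w
      have e1 : ∏ i, t' i ^ w i = t' l ^ w l * ∏ i ∈ Finset.univ.erase l, t' i ^ w i :=
        (Finset.mul_prod_erase Finset.univ _ (Finset.mem_univ l)).symm
      have e2 : ∏ i, t i ^ w i = t l ^ w l * ∏ i ∈ Finset.univ.erase l, t i ^ w i :=
        (Finset.mul_prod_erase Finset.univ _ (Finset.mem_univ l)).symm
      have e3 : ∏ i ∈ Finset.univ.erase l, t' i ^ w i
          = ∏ i ∈ Finset.univ.erase l, t i ^ w i :=
        Finset.prod_congr rfl fun i hi => by rw [ht'ne i (Finset.ne_of_mem_erase hi)]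
      rw [e1, e3, e2, ht'l, mul_zpow]
      ring
    -- t' belongs to the old region
    have ht'mem : t' ∈ polyRegion n r γ' δ' μ' := by
      refine ⟨fun i => ?_, fun i hi => ?_, ?_⟩
      · by_cases hil : i = l
        · rw [hil, ht'l]
          refine ⟨mul_pos (htb l).1 he0, ?_⟩
          rw [hedef]; split_ifs with hv
          · have heq1 : δ'' l * (δ' l / δ'' l) = δ' l := by
              rw [mul_comm, div_mul_cancel₀ _ (hδ''pos l).ne']
            calc t l * (δ' l / δ'' l) ≤ δ'' l * (δ' l / δ'' l) :=
                mul_le_mul_of_nonneg_right (htb l).2 (div_pos (hδ'pos l) (hδ''pos l)).le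
              _ = δ' l := heq1
          · have hlr := hlr' hv
            have hg1 := (hgfacts hlr).1
            have hg0 := (hgfacts hlr).2.2.2.2
            have he1 : γ' l / g ≤ 1 := (div_le_one hg0).mpr hg1.le
            calc t l * (γ' l / g) ≤ t l * 1 :=
                mul_le_mul_of_nonneg_left he1 (htb l).1.le
              _ = t l := mul_one _
              _ ≤ δ'' l := (htb l).2
              _ ≤ δ' l := (hδ''δ' l).le
        · rw [ht'ne i hil]
          exact ⟨(htb i).1, le_trans (htb i).2 (hδ''δ' i).le⟩
      · by_cases hil : i = l
        · rw [hil] at hi ⊢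
          rw [ht'l, hedef]
          have hg1 := (hgfacts hi).1
          have hg0 := (hgfacts hi).2.2.2.2
          have htg : g ≤ t l := by
            have := htγ l hi
            rwa [hγ''l hi] at this
          split_ifs with hv
          · have he1 : (1 : ℝ) ≤ δ' l / δ'' l := (one_le_div (hδ''pos l)).mpr (hδ''δ' l).le
            calc γ' l ≤ g := hg1.le
              _ ≤ t l := htg
              _ = t l * 1 := (mul_one _).symm
              _ ≤ t l * (δ' l / δ'' l) := mul_le_mul_of_nonneg_left he1 (htb l).1.le
          · have heq2 : γ' l = g * (γ' l / g) := by
              rw [mul_comm, div_mul_cancel₀ _ hg0.ne']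
            calc γ' l = g * (γ' l / g) := heq2
              _ ≤ t l * (γ' l / g) := mul_le_mul_of_nonneg_right htg
                  (div_pos (hγ'pos l hi) hg0).le
        · rw [ht'ne i hil]
          have hgi := htγ i hi
          rwa [hγ''eq i hil] at hgi
      · -- product condition
        by_cases hlr : (l : ℕ) < r
        · have hmem : l ∈ Finset.univ.filter (fun i : Fin n => (i : ℕ) < r) :=
            Finset.mem_filter.mpr ⟨Finset.mem_univ l, hlr⟩
          have e1 : ∏ i ∈ Finset.univ.filter (fun i : Fin n => (i : ℕ) < r), t' i
              = t' l * ∏ i ∈ (Finset.univ.filter (fun i : Fin n => (i : ℕ) < r)).erase l, t' i :=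
            (Finset.mul_prod_erase _ _ hmem).symm
          have e2 : ∏ i ∈ Finset.univ.filter (fun i : Fin n => (i : ℕ) < r), t i
              = t l * ∏ i ∈ (Finset.univ.filter (fun i : Fin n => (i : ℕ) < r)).erase l, t i :=
            (Finset.mul_prod_erase _ _ hmem).symm
          have e3 : ∏ i ∈ (Finset.univ.filter (fun i : Fin n => (i : ℕ) < r)).erase l, t' i
              = ∏ i ∈ (Finset.univ.filter (fun i : Fin n => (i : ℕ) < r)).erase l, t i :=
            Finset.prod_congr rfl fun i hi => ht'ne i (Finset.ne_of_mem_erase hi)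
          have e4 : ∏ i ∈ Finset.univ.filter (fun i : Fin n => (i : ℕ) < r), t' i
              = e * ∏ i ∈ Finset.univ.filter (fun i : Fin n => (i : ℕ) < r), t i := by
            rw [e1, e3, e2, ht'l]; ring
          rw [e4]
          have hemu : μ' ≤ e * μ'' := by
            rw [hedef]; split_ifs with hv
            · have he1 : (1 : ℝ) ≤ δ' l / δ'' l := (one_le_div (hδ''pos l)).mpr (hδ''δ' l).le
              calc μ' ≤ μ'' := hμ'μ''
                _ = 1 * μ'' := (one_mul _).symm
                _ ≤ (δ' l / δ'' l) * μ'' := mul_le_mul_of_nonneg_right he1 hμ''pos.le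
            · have hlr2 := hlr' hv
              have hg0 := (hgfacts hlr2).2.2.2.2
              have : μ'' = μ' * g / γ' l := by rw [hμ''def, if_pos hlr2]
              rw [this]
              have hγ'l0 := hγ'pos l hlr2
              have heq : γ' l / g * (μ' * g / γ' l) = μ' := by
                field_simp
              rw [heq]
          calc μ' ≤ e * μ'' := hemu
            _ ≤ e * ∏ i ∈ Finset.univ.filter (fun i : Fin n => (i : ℕ) < r), t i :=
              mul_le_mul_of_nonneg_left htμ he0.le
        · have e4 : ∏ i ∈ Finset.univ.filter (fun i : Fin n => (i : ℕ) < r), t' i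
              = ∏ i ∈ Finset.univ.filter (fun i : Fin n => (i : ℕ) < r), t i :=
            Finset.prod_congr rfl fun i hi => ht'ne i (by
              rintro rfl
              exact hlr (Finset.mem_filter.mp hi).2)
          rw [e4]
          exact le_trans hμ'μ'' htμ
    -- the exponential factor
    have hefac : (e ^ (v.1 l))⁻¹ ≤ ρ ^ (v.1 l).natAbs := by
      rcases le_or_gt 0 (v.1 l) with hv | hv
      · obtain ⟨m, hm⟩ := Int.eq_ofNat_of_zero_le hv
        rw [hm, zpow_natCast, ← inv_pow, Int.natAbs_natCast]
        refine pow_le_pow_left₀ (inv_nonneg.mpr ?_) ?_ m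
        · exact (le_of_lt (by rw [hedef, if_pos hv]; exact div_pos (hδ'pos l) (hδ''pos l)))
        · have : e = δ' l / δ'' l := by rw [hedef, if_pos hv]
          rw [this, inv_div]
          exact le_max_left _ _
      · have hlr := hlr' (not_le.mpr hv)
        obtain ⟨m, hm⟩ : ∃ m : ℕ, v.1 l = -(m : ℤ) := ⟨(v.1 l).natAbs, by omega⟩
        have hna : (v.1 l).natAbs = m := by omega
        rw [hm, zpow_neg, inv_inv, zpow_natCast, Int.natAbs_neg, Int.natAbs_natCast]
        refine pow_le_pow_left₀ he0.le ?_ m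
        have : e = γ' l / g := by rw [hedef, if_neg (not_le.mpr hv)]
        rw [this]
        refine le_trans ?_ (le_max_right _ _)
        rw [if_pos hlr]
    -- conclude
    have hprod : ∏ i, t i ^ v.1 i = (e ^ (v.1 l))⁻¹ * ∏ i, t' i ^ v.1 i := by
      rw [hprodid v.1]
      field_simp
    have ht'nonneg : 0 ≤ ∏ i, t' i ^ v.1 i :=
      Finset.prod_nonneg fun i _ => zpow_nonneg (ht'mem.1 i).1.le _
    calc ∏ i, t i ^ v.1 i = (e ^ (v.1 l))⁻¹ * ∏ i, t' i ^ v.1 i := hprod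
      _ ≤ ρ ^ (v.1 l).natAbs * ∏ i, t' i ^ v.1 i :=
        mul_le_mul_of_nonneg_right hefac ht'nonneg
      _ ≤ ρ ^ (v.1 l).natAbs * polyWeight n r γ' δ' μ' v.1 :=
        mul_le_mul_of_nonneg_left
          (le_polyWeight hδ'pos hγ'pos v.2 ht'mem) (pow_nonneg hρ0 _)
  have hweight : ∀ v : LaurentExp n r,
      polyWeight n r γ'' δ'' μ'' v.1 ≤ ρ ^ (v.1 l).natAbs * polyWeight n r γ' δ' μ' v.1 :=
    fun v => polyWeight_le
      (mul_nonneg (pow_nonneg hρ0 _) polyWeight_nonneg) (hscale v)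
  -- final assembly
  obtain ⟨C, hC0, hC⟩ := int_inv_pow_bound K hρ0 hρ1
  refine ⟨γ'', δ'', μ'', hadm1, fun i => hδδ'' i, hμ''pos, hμ''μ, ?_⟩
  have hb_le : ∀ v : LaurentExp n r,
      ‖(if v.1 l = 0 then (0 : K) else a v / ((v.1 l : ℤ) : K))‖ * polyWeight n r γ'' δ'' μ'' v.1
        ≤ C * (‖a v‖ * polyWeight n r γ' δ' μ' v.1) := by
    intro v
    by_cases hv0 : v.1 l = 0
    · rw [if_pos hv0, norm_zero, zero_mul]
      exact mul_nonneg hC0 (mul_nonneg (norm_nonneg _) polyWeight_nonneg)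
    · rw [if_neg hv0, norm_div]
      calc ‖a v‖ / ‖((v.1 l : ℤ) : K)‖ * polyWeight n r γ'' δ'' μ'' v.1
          ≤ ‖a v‖ / ‖((v.1 l : ℤ) : K)‖ * (ρ ^ (v.1 l).natAbs * polyWeight n r γ' δ' μ' v.1) :=
            mul_le_mul_of_nonneg_left (hweight v)
              (div_nonneg (norm_nonneg _) (norm_nonneg _))
        _ = (‖((v.1 l : ℤ) : K)‖⁻¹ * ρ ^ (v.1 l).natAbs) * (‖a v‖ * polyWeight n r γ' δ' μ' v.1) := by
            ring
        _ ≤ C * (‖a v‖ * polyWeight n r γ' δ' μ' v.1) :=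
            mul_le_mul_of_nonneg_right (hC _ hv0)
              (mul_nonneg (norm_nonneg _) polyWeight_nonneg)
  have htends : Tendsto (fun v : LaurentExp n r =>
      C * (‖a v‖ * polyWeight n r γ' δ' μ' v.1)) cofinite (𝓝 0) := by
    have := h5.const_mul C
    rwa [mul_zero] at this
  exact squeeze_zero (fun v => mul_nonneg (norm_nonneg _) polyWeight_nonneg)
    hb_le htends
end
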